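/- arXiv:1308.6614 — 7 statements merged into one kernel-verified Lean document; each statement's English description precedes it below -/
import Mathlib

section
/- Let μ be a finite positive measure on the unit circle 𝕋 with infinite support, let n ≥ 1, let φ_0,…,φ_{n−1} be polynomials with deg φ_j = j that are orthonormal in L²(μ) (∫_𝕋 φ_j·conj(φ_k) dμ = δ_{jk}), let Φ_n be the monic polynomial of degree n with ∫_𝕋 Φ_n(z)·conj(z^j) dμ(z) = 0 for j = 0,…,n−1, and set K_{n−1}(ξ,z) = Σ_{j=0}^{n−1} conj(φ_j(ξ))·φ_j(z). Suppose ξ_1,…,ξ_m ∈ 𝕋 are distinct points with m ≤ n satisfying K_{n−1}(ξ_j,ξ_l) = 0 for all j ≠ l, let m_1,…,m_m ≥ 0, and set η = μ + Σ_{k=1}^m m_k·δ_{ξ_k} (δ_{ξ} denoting the unit point mass at ξ). Then the polynomial Ψ(z) = Φ_n(z) − Σ_{k=1}^m [m_k·Φ_n(ξ_k)/(1 + m_k·K_{n−1}(ξ_k,ξ_k))]·K_{n−1}(ξ_k,z) is monic of degree n and satisfies ∫_𝕋 Ψ(z)·conj(z^j) dη(z) = 0 for j = 0,…,n−1; i.e.,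 Ψ is the n-th monic orthogonal polynomial of η. -/
open MeasureTheory Polynomial ComplexConjugate

/-- A measure on `ℂ` is supported on the unit circle. -/
def OnCircle (μ : Measure ℂ) : Prop := μ {z : ℂ | ‖z‖ ≠ 1} = 0



lemma integrable_of_onCircle (μ : Measure ℂ) [IsFiniteMeasure μ] (hcirc : OnCircle μ)
    (f : ℂ → ℂ) (hf : Continuous f) : Integrable f μ := by
  obtain ⟨C, hC⟩ := (isCompact_sphere (0:ℂ) 1).exists_bound_of_continuousOn hf.continuousOn
  refine Integrable.mono' (integrable_const C) hf.aestronglyMeasurable ?_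
  have h1 : ∀ᵐ z ∂μ, ‖z‖ = 1 := by
    rw [ae_iff]; exact hcirc
  filter_upwards [h1] with z hz
  exact hC z (by simpa [mem_sphere_zero_iff_norm] using hz)

lemma integrable_dirac' (f : ℂ → ℂ) (hf : Continuous f) (a : ℂ) :
    Integrable f (Measure.dirac a) := by
  refine ⟨hf.aestronglyMeasurable, ?_⟩
  simp [HasFiniteIntegral, lintegral_dirac]

lemma rep_lemma (n : ℕ) (φ : ℕ → Polynomial ℂ)
    (hdeg : ∀ j < n, (φ j).natDegree = j) (hne : ∀ j < n, φ j ≠ 0) :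
    ∀ p : Polynomial ℂ, p.degree < n → ∃ a : Fin n → ℂ,
      p = ∑ i : Fin n, Polynomial.C (a i) * φ i := by
  have H : ∀ d : ℕ, ∀ p : Polynomial ℂ, p.natDegree = d → p.degree < n →
      ∃ a : Fin n → ℂ, p = ∑ i : Fin n, Polynomial.C (a i) * φ i := by
    intro d
    induction d using Nat.strong_induction_on with
    | _ d ih =>
      intro p hpd hp
      by_cases hp0 : p = 0
      · exact ⟨0, by simp [hp0]⟩
      have hdn : d < n := by
        rw [Polynomial.degree_eq_natDegree hp0, hpd] at hp
        exact_mod_cast hp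
      have hφne := hne d hdn
      have hφlead : (φ d).leadingCoeff ≠ 0 := leadingCoeff_ne_zero.mpr hφne
      set c := p.leadingCoeff / (φ d).leadingCoeff with hc
      have hcne : c ≠ 0 := div_ne_zero (leadingCoeff_ne_zero.mpr hp0) hφlead
      have hlead : (Polynomial.C c * φ d).leadingCoeff = p.leadingCoeff := by
        rw [leadingCoeff_mul, leadingCoeff_C, hc, div_mul_cancel₀ _ hφlead]
      have hdegeq : p.degree = (Polynomial.C c * φ d).degree := by
        rw [degree_C_mul hcne, Polynomial.degree_eq_natDegree hp0, hpd,
          Polynomial.degree_eq_natDegree hφne, hdeg d hdn]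
      have hqd : (p - Polynomial.C c * φ d).degree < p.degree :=
        degree_sub_lt hdegeq hp0 hlead.symm
      have hone : ∀ (e : ℂ), ∑ i : Fin n,
          Polynomial.C (if i = (⟨d, hdn⟩ : Fin n) then e else 0) * φ (i : ℕ)
            = Polynomial.C e * φ d := by
        intro e
        rw [Finset.sum_eq_single (⟨d, hdn⟩ : Fin n)
          (fun b _ hb => by simp [hb]) (by simp)]
        simp
      by_cases hq0 : p - Polynomial.C c * φ d = 0
      · refine ⟨fun i => if i = (⟨d, hdn⟩ : Fin n) then c else 0, ?_⟩
        rw [hone c, ← sub_eq_zero]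
        exact hq0
      · have hqdn : (p - Polynomial.C c * φ d).natDegree < d := by
          have h := Polynomial.natDegree_lt_natDegree hq0 hqd
          rwa [hpd] at h
        obtain ⟨a, ha⟩ := ih _ hqdn _ rfl (lt_trans hqd hp)
        refine ⟨fun i => a i + if i = (⟨d, hdn⟩ : Fin n) then c else 0, ?_⟩
        have : ∑ i : Fin n,
            Polynomial.C (a i + if i = (⟨d, hdn⟩ : Fin n) then c else 0) * φ (i : ℕ)
              = (p - Polynomial.C c * φ d) + Polynomial.C c * φ d := by
          simp only [Polynomial.C_add, add_mul, Finset.sum_add_distrib, ← ha, hone c]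
        rw [this]; ring
  intro p hp
  exact H p.natDegree p rfl hp

/-- adding point masses at points `ξ_k` on the circle at which the
Christoffel–Darboux kernel vanishes off-diagonally, the polynomial
`Ψ = Φ_n − Σ_k m_k Φ_n(ξ_k)/(1 + m_k K_{n−1}(ξ_k,ξ_k)) · K_{n−1}(ξ_k,·)`
is the `n`-th monic orthogonal polynomial of the new measure `η`. -/
theorem add_masses_orthogonal (μ : Measure ℂ) [IsFiniteMeasure μ] (hcirc : OnCircle μ)
    (hsupp : {z : ℂ | ∀ ε > 0, 0 < μ (Metric.ball z ε)}.Infinite)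
    (n : ℕ) (hn : 1 ≤ n)
    (φ : ℕ → Polynomial ℂ)
    (hφdeg : ∀ j < n, (φ j).natDegree = j)
    (hφorth : ∀ j < n, ∀ k < n,
      ∫ z, (φ j).eval z * conj ((φ k).eval z) ∂μ = if j = k then 1 else 0)
    (Φ : Polynomial ℂ) (hΦmonic : Φ.Monic) (hΦdeg : Φ.natDegree = n)
    (hΦorth : ∀ j < n, ∫ z, Φ.eval z * conj (z ^ j) ∂μ = 0)
    (m : ℕ) (hm : m ≤ n) (ξ : Fin m → ℂ) (hξcirc : ∀ k, ‖ξ k‖ = 1)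
    (hξinj : Function.Injective ξ)
    (K : ℂ → ℂ → ℂ)
    (hK : ∀ x z : ℂ, K x z = ∑ j ∈ Finset.range n, conj ((φ j).eval x) * (φ j).eval z)
    (hKzero : ∀ j k : Fin m, j ≠ k → K (ξ j) (ξ k) = 0)
    (mass : Fin m → ℝ) (hmass : ∀ k, 0 ≤ mass k)
    (η : Measure ℂ)
    (hη : η = μ + ∑ k : Fin m, (ENNReal.ofReal (mass k)) • Measure.dirac (ξ k))
    (Ψ : Polynomial ℂ)
    (hΨ : Ψ = Φ - ∑ k : Fin m,
      Polynomial.C ((mass k : ℂ) * Φ.eval (ξ k) / (1 + (mass k : ℂ) * K (ξ k) (ξ k))) *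
        ∑ j ∈ Finset.range n, Polynomial.C (conj ((φ j).eval (ξ k))) * φ j) :
    Ψ.Monic ∧ Ψ.natDegree = n ∧ ∀ j < n, ∫ z, Ψ.eval z * conj (z ^ j) ∂η = 0 := by
  -- abbreviations
  set c : Fin m → ℂ :=
    fun k => (mass k : ℂ) * Φ.eval (ξ k) / (1 + (mass k : ℂ) * K (ξ k) (ξ k)) with hc
  set P : Fin m → Polynomial ℂ :=
    fun k => ∑ j ∈ Finset.range n, Polynomial.C (conj ((φ j).eval (ξ k))) * φ j with hP
  have hΨ' : Ψ = Φ - ∑ k : Fin m, Polynomial.C (c k) * P k := hΨ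
  clear hΨ
  -- continuity and integrability helpers
  have hcont : ∀ (p : Polynomial ℂ) (j : ℕ),
      Continuous fun z : ℂ => p.eval z * conj (z ^ j) :=
    fun p j => p.continuous.mul (Complex.continuous_conj.comp (continuous_pow j))
  have hcont2 : ∀ (p q : Polynomial ℂ),
      Continuous fun z : ℂ => p.eval z * conj (q.eval z) :=
    fun p q => p.continuous.mul (Complex.continuous_conj.comp q.continuous)
  have hint : ∀ (p : Polynomial ℂ) (j : ℕ),
      Integrable (fun z => p.eval z * conj (z ^ j)) μ :=
    fun p j => integrable_of_onCircle μ hcirc _ (hcont p j)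
  have hint2 : ∀ (p q : Polynomial ℂ),
      Integrable (fun z => p.eval z * conj (q.eval z)) μ :=
    fun p q => integrable_of_onCircle μ hcirc _ (hcont2 p q)
  -- nonvanishing of the orthonormal polynomials
  have hφne : ∀ j < n, φ j ≠ 0 := by
    intro j hj h0
    have h := hφorth j hj j hj
    rw [h0] at h
    simp at h
  -- kernel evaluation
  have hPeval : ∀ (k : Fin m) (z : ℂ), (P k).eval z = K (ξ k) z := by
    intro k z
    rw [hK, hP]
    simp [eval_finset_sum]
  -- degree bound
  have hPdeg : ∀ k : Fin m, (P k).degree < (n : WithBot ℕ) := by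
    intro k
    refine lt_of_le_of_lt (degree_sum_le _ _) ((Finset.sup_lt_iff (a := (n : WithBot ℕ)) (by exact_mod_cast WithBot.bot_lt_coe n)).mpr ?_)
    intro j hj
    calc (Polynomial.C (conj ((φ j).eval (ξ k))) * φ j).degree
        ≤ 0 + (φ j).degree :=
          le_trans (degree_mul_le _ _) (add_le_add degree_C_le le_rfl)
      _ = (φ j).degree := by rw [zero_add]
      _ ≤ ((φ j).natDegree : WithBot ℕ) := degree_le_natDegree
      _ < (n : WithBot ℕ) := by
          rw [hφdeg j (Finset.mem_range.mp hj)]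
          exact_mod_cast Finset.mem_range.mp hj
  have hSdeg : (∑ k : Fin m, Polynomial.C (c k) * P k).degree < (n : WithBot ℕ) := by
    refine lt_of_le_of_lt (degree_sum_le _ _) ((Finset.sup_lt_iff (a := (n : WithBot ℕ)) (by exact_mod_cast WithBot.bot_lt_coe n)).mpr ?_)
    intro k _
    calc (Polynomial.C (c k) * P k).degree
        ≤ 0 + (P k).degree :=
          le_trans (degree_mul_le _ _) (add_le_add degree_C_le le_rfl)
      _ = (P k).degree := by rw [zero_add]
      _ < (n : WithBot ℕ) := hPdeg k
  have hdegΦ : Φ.degree = (n : WithBot ℕ) := by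
    rw [degree_eq_natDegree hΦmonic.ne_zero, hΦdeg]
  have hΨ2 : Ψ = Φ + -(∑ k : Fin m, Polynomial.C (c k) * P k) := by rw [hΨ']; ring
  have hmono : Ψ.Monic := by
    rw [hΨ2]
    exact hΦmonic.add_of_left (by rw [degree_neg, hdegΦ]; exact hSdeg)
  have hdegΨ : Ψ.degree = (n : WithBot ℕ) := by
    rw [hΨ2, degree_add_eq_left_of_degree_lt (by rw [degree_neg, hdegΦ]; exact hSdeg), hdegΦ]
  refine ⟨hmono, natDegree_eq_of_degree_eq_some hdegΨ, ?_⟩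
  -- the orthogonality statement
  intro j hj
  obtain ⟨b, hb⟩ := rep_lemma n φ hφdeg hφne ((Polynomial.X : Polynomial ℂ) ^ j)
    (by rw [degree_X_pow]; exact_mod_cast hj)
  have hzj : ∀ z : ℂ, z ^ j = ∑ i : Fin n, b i * (φ (i : ℕ)).eval z := by
    intro z
    have := congrArg (Polynomial.eval z) hb
    simpa [eval_finset_sum] using this
  -- reproducing against monomials: each orthonormal polynomial
  have key1 : ∀ i : Fin n, ∫ z, (φ (i : ℕ)).eval z * conj (z ^ j) ∂μ = conj (b i) := by
    intro i
    have hrw : (fun z : ℂ => (φ (i : ℕ)).eval z * conj (z ^ j))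
        = fun z => ∑ l : Fin n,
            conj (b l) * ((φ (i : ℕ)).eval z * conj ((φ (l : ℕ)).eval z)) := by
      funext z
      rw [hzj z, map_sum, Finset.mul_sum]
      refine Finset.sum_congr rfl fun l _ => ?_
      rw [map_mul]
      ring
    have hisum := integral_finset_sum (μ := μ) Finset.univ
      (f := fun (l : Fin n) (z : ℂ) =>
        conj (b l) * ((φ (i : ℕ)).eval z * conj ((φ (l : ℕ)).eval z)))
      (fun l _ => ((hint2 (φ i) (φ l)).const_mul _))
    rw [hrw, hisum]
    have hlint : ∀ l : Fin n, ∫ z, conj (b l) * ((φ (i : ℕ)).eval z * conj ((φ (l : ℕ)).eval z)) ∂μ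
        = conj (b l) * if (i : ℕ) = (l : ℕ) then 1 else 0 := by
      intro l
      rw [integral_const_mul, hφorth i i.2 l l.2]
    rw [Finset.sum_congr rfl fun l _ => hlint l]
    rw [Finset.sum_eq_single i (fun l _ hl => by
      simp [Fin.val_eq_val, hl.symm]) (by simp)]
    simp
  -- reproducing property of the kernel
  have key2 : ∀ k : Fin m, ∫ z, (P k).eval z * conj (z ^ j) ∂μ = conj ((ξ k) ^ j) := by
    intro k
    have hrw : (fun z : ℂ => (P k).eval z * conj (z ^ j))
        = fun z => ∑ i ∈ Finset.range n,
            conj ((φ i).eval (ξ k)) * ((φ i).eval z * conj (z ^ j)) := by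
      funext z
      rw [hP]
      simp only [eval_finset_sum, eval_mul, eval_C, Finset.sum_mul, mul_assoc]
    rw [hrw, integral_finset_sum _ (fun i _ => ((hint (φ i) j).const_mul _))]
    have hlint : ∀ i ∈ Finset.range n,
        ∫ z, conj ((φ i).eval (ξ k)) * ((φ i).eval z * conj (z ^ j)) ∂μ
          = conj ((φ i).eval (ξ k)) * ∫ z, (φ i).eval z * conj (z ^ j) ∂μ :=
      fun i _ => integral_const_mul _ _
    rw [Finset.sum_congr rfl hlint,
      ← Fin.sum_univ_eq_sum_range
        (fun i => conj ((φ i).eval (ξ k)) * ∫ z, (φ i).eval z * conj (z ^ j) ∂μ) n]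
    rw [Finset.sum_congr rfl fun i (_ : i ∈ Finset.univ) => by rw [key1 i]]
    rw [hzj (ξ k), map_sum]
    refine Finset.sum_congr rfl fun i _ => ?_
    rw [map_mul]
    ring
  -- integral against μ
  have hμint : ∫ z, Ψ.eval z * conj (z ^ j) ∂μ = - ∑ k : Fin m, c k * conj ((ξ k) ^ j) := by
    have hexp : (fun z : ℂ => Ψ.eval z * conj (z ^ j))
        = fun z => Φ.eval z * conj (z ^ j)
            - ∑ k : Fin m, c k * ((P k).eval z * conj (z ^ j)) := by
      funext z
      rw [hΨ']
      simp only [eval_sub, eval_finset_sum, eval_mul, eval_C, sub_mul, Finset.sum_mul, mul_assoc]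
    rw [hexp, integral_sub (hint Φ j)
      (integrable_finset_sum _ fun k _ => ((hint (P k) j).const_mul _)),
      hΦorth j hj, integral_finset_sum _ (fun k _ => ((hint (P k) j).const_mul _))]
    rw [Finset.sum_congr rfl fun k (_ : k ∈ Finset.univ) => by
      rw [integral_const_mul, key2 k]]
    ring
  -- value of Ψ at the mass points
  have hval : ∀ k : Fin m, (mass k : ℂ) * Ψ.eval (ξ k) = c k := by
    intro k
    obtain ⟨S, hS0, hSK⟩ : ∃ S : ℝ, 0 ≤ S ∧ K (ξ k) (ξ k) = (S : ℂ) := by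
      refine ⟨∑ i ∈ Finset.range n, Complex.normSq ((φ i).eval (ξ k)), ?_, ?_⟩
      · exact Finset.sum_nonneg fun i _ => Complex.normSq_nonneg _
      · rw [hK]
        push_cast
        exact Finset.sum_congr rfl fun i _ => by
          rw [mul_comm, Complex.mul_conj]
    have hD : (1 : ℂ) + (mass k : ℂ) * K (ξ k) (ξ k) ≠ 0 := by
      rw [hSK]
      have hpos : (0 : ℝ) < 1 + mass k * S := by nlinarith [mul_nonneg (hmass k) hS0]
      have : ((1 + mass k * S : ℝ) : ℂ) ≠ 0 := by exact_mod_cast ne_of_gt hpos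
      push_cast at this
      exact this
    have hΨval : Ψ.eval (ξ k) = Φ.eval (ξ k) - c k * K (ξ k) (ξ k) := by
      rw [hΨ']
      simp only [eval_sub, eval_finset_sum, eval_mul, eval_C]
      congr 1
      rw [Finset.sum_congr rfl fun l (_ : l ∈ Finset.univ) => by rw [hPeval l (ξ k)]]
      exact Finset.sum_eq_single k
        (fun l _ hl => by rw [hKzero l k hl, mul_zero]) (by simp)
    rw [hΨval, hc]
    field_simp
    try ring
    try exact Or.inl trivial
  -- integral against η
  have hηx : ∫ z, Ψ.eval z * conj (z ^ j) ∂η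
      = ∫ z, Ψ.eval z * conj (z ^ j) ∂μ
        + ∑ k : Fin m, mass k • (Ψ.eval (ξ k) * conj ((ξ k) ^ j)) := by
    rw [hη, integral_add_measure (hint Ψ j)
      ((integrable_finset_sum_measure).mpr fun k _ =>
        (integrable_dirac' _ (hcont Ψ j) _).smul_measure ENNReal.ofReal_ne_top),
      integral_finset_sum_measure (fun k _ =>
        (integrable_dirac' _ (hcont Ψ j) _).smul_measure ENNReal.ofReal_ne_top)]
    congr 1
    refine Finset.sum_congr rfl fun k _ => ?_
    rw [integral_smul_measure, integral_dirac, ENNReal.toReal_ofReal (hmass k)]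
  have hfix : ∑ k : Fin m, mass k • (Ψ.eval (ξ k) * conj ((ξ k) ^ j))
      = ∑ k : Fin m, c k * conj ((ξ k) ^ j) :=
    Finset.sum_congr rfl fun k _ => by rw [Complex.real_smul, ← mul_assoc, hval k]
  rw [hηx, hμint, hfix]
  ring
end

section
/- Let μ be a probability measure on the unit circle 𝕋 with infinite support, let n ≥ 1, let Φ_n be the n-th monic orthogonal polynomial of μ, let φ_0,…,φ_{n−1} be orthonormal polynomials of μ, and let K_{n−1}(ξ,z) = Σ_{j=0}^{n−1} conj(φ_j(ξ))·φ_j(z). For t ∈ (0,1), set μ(t) = (1−t)·μ + t·δ_1, where δ_1 is the unit point mass at z = 1. Then the polynomial Φ_n(z) − t·Φ_n(1)·K_{n−1}(1,z)/(1 − t + t·K_{n−1}(1,1)) is monic of degree n and is orthogonal to z^j in L²(μ(t)) for j = 0,…,n−1; i.e., it equals the n-th monic orthogonal polynomial Φ_n(·;μ(t)). -/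
open MeasureTheory Polynomial ComplexConjugate

/-- Continuous functions are integrable w.r.t. a finite measure supported on the circle. -/
lemma aux_integrable {μ : Measure ℂ} [IsFiniteMeasure μ] (hcirc : OnCircle μ)
    {f : ℂ → ℂ} (hf : Continuous f) : Integrable f μ := by
  obtain ⟨C, hC⟩ := (isCompact_sphere (0 : ℂ) 1).exists_bound_of_continuousOn hf.continuousOn
  refine Integrable.mono' (integrable_const C) hf.aestronglyMeasurable ?_
  have hae : ∀ᵐ z ∂μ, ‖z‖ = 1 := by
    rw [ae_iff]
    exact hcirc
  filter_upwards [hae] with z hz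
  apply hC
  simp [Metric.mem_sphere, Complex.dist_eq, hz]

/-- Continuous functions are integrable w.r.t. a Dirac measure. -/
lemma aux_integrable_dirac {f : ℂ → ℂ} (hf : Continuous f) (a : ℂ) :
    Integrable f (Measure.dirac a) := by
  refine ⟨hf.aestronglyMeasurable, ?_⟩
  simp [HasFiniteIntegral, lintegral_dirac]

lemma aux_span {n : ℕ} {φ : ℕ → Polynomial ℂ} (hdeg : ∀ j < n, (φ j).natDegree = j)
    (hne : ∀ j < n, φ j ≠ 0) :
    ∀ m, m ≤ n → ∀ p : Polynomial ℂ, p.degree < (m : ℕ) →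
      ∃ b : ℕ → ℂ, p = ∑ k ∈ Finset.range n, b k • φ k := by
  intro m
  induction m with
  | zero =>
    intro _ p hp
    have hp0 : p = 0 := by
      by_contra h
      exact absurd hp (not_lt.2 (by simpa using Polynomial.zero_le_degree_iff.2 h))
    exact ⟨0, by simp [hp0]⟩
  | succ m ih =>
    intro hmn p hp
    by_cases hp0 : p = 0
    · exact ⟨0, by simp [hp0]⟩
    have hdlt : p.natDegree < m + 1 := by
      exact (Polynomial.natDegree_lt_iff_degree_lt hp0).2 hp
    set d := p.natDegree with hd
    have hdn : d < n := lt_of_lt_of_le hdlt hmn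
    have hφd : (φ d).natDegree = d := hdeg d hdn
    have hφdne : φ d ≠ 0 := hne d hdn
    have hlcne : (φ d).leadingCoeff ≠ 0 := Polynomial.leadingCoeff_ne_zero.2 hφdne
    set a := p.leadingCoeff / (φ d).leadingCoeff with ha
    have hane : a ≠ 0 := div_ne_zero (Polynomial.leadingCoeff_ne_zero.2 hp0) hlcne
    have hdegeq : (Polynomial.C a * φ d).degree = p.degree := by
      rw [Polynomial.degree_C_mul hane, Polynomial.degree_eq_natDegree hφdne,
        Polynomial.degree_eq_natDegree hp0, hφd]
    have hlceq : p.leadingCoeff = (Polynomial.C a * φ d).leadingCoeff := by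
      rw [Polynomial.leadingCoeff_mul, Polynomial.leadingCoeff_C]
      rw [ha, div_mul_cancel₀ _ hlcne]
    have hsub : (p - Polynomial.C a * φ d).degree < p.degree :=
      Polynomial.degree_sub_lt hdegeq.symm hp0 hlceq
    have hsub' : (p - Polynomial.C a * φ d).degree < (m : ℕ) := by
      refine lt_of_lt_of_le hsub ?_
      rw [Polynomial.degree_eq_natDegree hp0]
      exact_mod_cast Nat.lt_succ_iff.1 hdlt
    obtain ⟨b, hb⟩ := ih (Nat.le_of_succ_le hmn) _ hsub'
    refine ⟨fun k => b k + if k = d then a else 0, ?_⟩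
    have hsum : ∑ k ∈ Finset.range n, ((b k + if k = d then a else 0) • φ k)
        = (∑ k ∈ Finset.range n, b k • φ k) + a • φ d := by
      simp only [add_smul, Finset.sum_add_distrib, ite_smul, zero_smul]
      rw [Finset.sum_ite_eq' (Finset.range n) d (fun k => a • φ k)]
      simp [Finset.mem_range.2 hdn]
    rw [hsum, ← hb, Polynomial.smul_eq_C_mul]
    ring

/-- for `μ(t) = (1−t)μ + t δ_1`, the polynomial
`Φ_n(z) − t Φ_n(1) K_{n−1}(1,z)/(1−t+tK_{n−1}(1,1))` is monic of degree `n` and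
orthogonal to `z^j`, `j < n`, in `L²(μ(t))`. -/
theorem add_mass_at_one_orthogonal (μ : Measure ℂ) [IsProbabilityMeasure μ]
    (hcirc : OnCircle μ)
    (hsupp : {z : ℂ | ∀ ε > 0, 0 < μ (Metric.ball z ε)}.Infinite)
    (n : ℕ) (hn : 1 ≤ n)
    (φ : ℕ → Polynomial ℂ)
    (hφdeg : ∀ j < n, (φ j).natDegree = j)
    (hφorth : ∀ j < n, ∀ k < n,
      ∫ z, (φ j).eval z * conj ((φ k).eval z) ∂μ = if j = k then 1 else 0)
    (Φ : Polynomial ℂ) (hΦmonic : Φ.Monic) (hΦdeg : Φ.natDegree = n)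
    (hΦorth : ∀ j < n, ∫ z, Φ.eval z * conj (z ^ j) ∂μ = 0)
    (K : ℂ → ℂ → ℂ)
    (hK : ∀ x z : ℂ, K x z = ∑ j ∈ Finset.range n, conj ((φ j).eval x) * (φ j).eval z)
    (t : ℝ) (ht : t ∈ Set.Ioo (0 : ℝ) 1)
    (μt : Measure ℂ)
    (hμt : μt = ENNReal.ofReal (1 - t) • μ + ENNReal.ofReal t • Measure.dirac (1 : ℂ))
    (Ψ : Polynomial ℂ)
    (hΨ : Ψ = Φ - Polynomial.C ((t : ℂ) * Φ.eval 1 / (1 - (t : ℂ) + (t : ℂ) * K 1 1)) *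
        ∑ j ∈ Finset.range n, Polynomial.C (conj ((φ j).eval 1)) * φ j) :
    Ψ.Monic ∧ Ψ.natDegree = n ∧ ∀ j < n, ∫ z, Ψ.eval z * conj (z ^ j) ∂μt = 0 := by
  obtain ⟨ht0, ht1⟩ := ht
  set S : Polynomial ℂ := ∑ j ∈ Finset.range n, Polynomial.C (conj ((φ j).eval 1)) * φ j with hS
  set c : ℂ := (t : ℂ) * Φ.eval 1 / (1 - (t : ℂ) + (t : ℂ) * K 1 1) with hc
  have hΨ' : Ψ = Φ - Polynomial.C c * S := hΨ
  have hΦne : Φ ≠ 0 := hΦmonic.ne_zero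
  have hΦdeg' : Φ.degree = (n : ℕ) := by
    rw [Polynomial.degree_eq_natDegree hΦne, hΦdeg]
  -- degree of S is < n
  have hSdeg : S.degree < (n : ℕ) := by
    rw [hS]
    refine lt_of_le_of_lt (Polynomial.degree_sum_le _ _) ?_
    rw [Finset.sup_lt_iff (by exact_mod_cast WithBot.bot_lt_coe n)]
    intro j hj
    refine lt_of_le_of_lt (Polynomial.degree_mul_le _ _) ?_
    refine lt_of_le_of_lt (add_le_add Polynomial.degree_C_le Polynomial.degree_le_natDegree) ?_
    rw [hφdeg j (Finset.mem_range.1 hj)]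
    simpa using (by exact_mod_cast Finset.mem_range.1 hj : (j : WithBot ℕ) < n)
  have hCSdeg : (Polynomial.C c * S).degree < Φ.degree := by
    rw [hΦdeg']
    exact lt_of_le_of_lt (le_trans (Polynomial.degree_mul_le _ _)
      (by simpa using add_le_add Polynomial.degree_C_le (le_refl S.degree))) hSdeg
  have hmonic : Ψ.Monic := by
    rw [hΨ']; exact hΦmonic.sub_of_left hCSdeg
  have hdeg : Ψ.natDegree = n := by
    rw [hΨ']
    rw [← hΦdeg]
    exact Polynomial.natDegree_eq_of_degree_eq (Polynomial.degree_sub_eq_left_of_degree_lt hCSdeg)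
  refine ⟨hmonic, hdeg, ?_⟩
  -- nonvanishing of the orthonormal polynomials
  have hne : ∀ k < n, φ k ≠ 0 := by
    intro k hk h0
    have h := hφorth k hk k hk
    rw [if_pos rfl] at h
    simp [h0] at h
  have hcont : ∀ p q : Polynomial ℂ, Continuous fun z => p.eval z * conj (q.eval z) :=
    fun p q => p.continuous.mul (RCLike.continuous_conj.comp q.continuous)
  have hint : ∀ p q : Polynomial ℂ, Integrable (fun z => p.eval z * conj (q.eval z)) μ :=
    fun p q => aux_integrable hcirc (hcont p q)
  have hSeval : ∀ z, S.eval z = ∑ k ∈ Finset.range n, conj ((φ k).eval 1) * (φ k).eval z := by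
    intro z; rw [hS]; simp [Polynomial.eval_finset_sum]
  -- reproducing property of the kernel
  have hrepro : ∀ p : Polynomial ℂ, p.degree < (n : ℕ) →
      ∫ z, p.eval z * conj (S.eval z) ∂μ = p.eval 1 := by
    intro p hp
    obtain ⟨b, rfl⟩ := aux_span hφdeg hne n le_rfl p hp
    have hintgr : (fun z => (∑ k ∈ Finset.range n, b k • φ k).eval z * conj (S.eval z))
        = fun z => ∑ k ∈ Finset.range n, ∑ l ∈ Finset.range n,
            (b k * (φ l).eval 1) * ((φ k).eval z * conj ((φ l).eval z)) := by
      funext z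
      rw [Polynomial.eval_finset_sum, hSeval z, map_sum, Finset.sum_mul_sum]
      refine Finset.sum_congr rfl fun k _ => Finset.sum_congr rfl fun l _ => ?_
      simp only [Polynomial.eval_smul, smul_eq_mul, map_mul, Complex.conj_conj]
      ring
    rw [hintgr, integral_finset_sum _
      (fun k _ => integrable_finset_sum _ (fun l _ => ((hint (φ k) (φ l)).const_mul _)))]
    rw [Finset.sum_congr rfl
      (fun k _ => integral_finset_sum _ (fun l _ => ((hint (φ k) (φ l)).const_mul _)))]
    simp only [integral_const_mul]
    have hinner : ∀ k ∈ Finset.range n,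
        ∑ l ∈ Finset.range n,
          (b k * (φ l).eval 1) * ∫ z, (φ k).eval z * conj ((φ l).eval z) ∂μ
        = b k * (φ k).eval 1 := by
      intro k hk
      rw [Finset.sum_eq_single k]
      · rw [hφorth k (Finset.mem_range.1 hk) k (Finset.mem_range.1 hk), if_pos rfl, mul_one]
      · intro l hl hlk
        rw [hφorth k (Finset.mem_range.1 hk) l (Finset.mem_range.1 hl),
          if_neg (fun h => hlk h.symm), mul_zero]
      · intro hk'; exact absurd hk hk'
    rw [Finset.sum_congr rfl hinner]
    simp [Polynomial.eval_finset_sum]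
  intro j hj
  have hintX : ∀ p : Polynomial ℂ, Integrable (fun z => p.eval z * conj (z ^ j)) μ := by
    intro p
    have h := hint p (Polynomial.X ^ j)
    simp only [Polynomial.eval_pow, Polynomial.eval_X] at h
    exact h
  have hcontX : ∀ p : Polynomial ℂ, Continuous (fun z => p.eval z * conj (z ^ j)) := by
    intro p
    have h := hcont p (Polynomial.X ^ j)
    simp only [Polynomial.eval_pow, Polynomial.eval_X] at h
    exact h
  have hXdeg : (Polynomial.X ^ j : Polynomial ℂ).degree < (n : ℕ) := by
    rw [Polynomial.degree_X_pow]; exact_mod_cast hj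
  have e1 : ∫ z, S.eval z * conj (z ^ j) ∂μ = 1 := by
    have h := hrepro (Polynomial.X ^ j) hXdeg
    simp only [Polynomial.eval_pow, Polynomial.eval_X] at h
    have h2 : ∫ z, S.eval z * conj (z ^ j) ∂μ = conj (∫ z, z ^ j * conj (S.eval z) ∂μ) := by
      rw [← integral_conj]
      congr 1; funext z
      simp only [map_mul, Complex.conj_conj]
      ring
    rw [h2, h]
    simp
  have hΨint : ∫ z, Ψ.eval z * conj (z ^ j) ∂μ = -c := by
    have hfn : (fun z => Ψ.eval z * conj (z ^ j))
        = fun z => Φ.eval z * conj (z ^ j) - c * (S.eval z * conj (z ^ j)) := by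
      funext z; rw [hΨ']; simp only [Polynomial.eval_sub, Polynomial.eval_mul,
        Polynomial.eval_C]; ring
    rw [hfn, integral_sub (hintX Φ) ((hintX S).const_mul c), integral_const_mul,
      hΦorth j hj, e1, mul_one, zero_sub]
  have hKr : ∃ r : ℝ, 0 ≤ r ∧ K 1 1 = (r : ℂ) := by
    refine ⟨∑ k ∈ Finset.range n, Complex.normSq ((φ k).eval 1),
      Finset.sum_nonneg (fun _ _ => Complex.normSq_nonneg _), ?_⟩
    rw [hK]; push_cast
    exact Finset.sum_congr rfl fun k _ => by rw [mul_comm, Complex.mul_conj]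
  obtain ⟨r, hr0, hr⟩ := hKr
  have hDne : (1 - (t : ℂ) + (t : ℂ) * K 1 1) ≠ 0 := by
    rw [hr]
    intro h
    have hre := congrArg Complex.re h
    simp only [Complex.add_re, Complex.sub_re, Complex.one_re, Complex.ofReal_re,
      Complex.mul_re, Complex.ofReal_im, Complex.zero_re, zero_mul, sub_zero] at hre
    nlinarith
  have hΨ1 : Ψ.eval 1 = Φ.eval 1 - c * K 1 1 := by
    rw [hΨ']
    simp only [Polynomial.eval_sub, Polynomial.eval_mul, Polynomial.eval_C]
    congr 1
    rw [hSeval 1, hK 1 1]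
  rw [hμt, integral_add_measure
      ((hintX Ψ).smul_measure ENNReal.ofReal_ne_top)
      ((aux_integrable_dirac (hcontX Ψ) 1).smul_measure ENNReal.ofReal_ne_top),
    integral_smul_measure, integral_smul_measure, integral_dirac, hΨint,
    ENNReal.toReal_ofReal (by linarith : (0:ℝ) ≤ 1 - t), ENNReal.toReal_ofReal ht0.le]
  simp only [one_pow, map_one, mul_one, hΨ1, hc, hr, Complex.real_smul]
  rw [hr] at hDne
  field_simp [hDne]
  push_cast; ring
end

section
/- Let μ be a probability measure on the unit circle 𝕋 with infinite support, n ≥ 1, let Φ_n(·;μ) be the n-th monic orthogonal polynomial of μ, let φ_0,…,φ_n be orthonormal polynomials of μ, and let K_j(1,1) = Σ_{l=0}^{j} |φ_l(1)|². For t ∈ (0,1), set μ(t) = (1−t)·μ + t·δ_1. Then the n-th monic orthogonal polynomial Φ_n(·;μ(t)) of μ(t) satisfies ∫_𝕋 |Φ_n(z;μ(t))|² dμ(t)(z) = (∫_𝕋 |Φ_n(z;μ)|² dμ(z)) · (1−t) · (1 − t + t·K_n(1,1)) / (1 − t + t·K_{n−1}(1,1)). -/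
open MeasureTheory Polynomial ComplexConjugate

lemma degree_C_mul_le' (a : ℂ) (p : Polynomial ℂ) : (Polynomial.C a * p).degree ≤ p.degree :=
  calc (Polynomial.C a * p).degree ≤ (Polynomial.C a).degree + p.degree := degree_mul_le _ _
  _ ≤ 0 + p.degree := add_le_add degree_C_le le_rfl
  _ = p.degree := zero_add _

lemma ofReal_norm_sq (w : ℂ) : ((‖w‖ ^ 2 : ℝ) : ℂ) = w * conj w := by
  rw [Complex.mul_conj, Complex.normSq_eq_norm_sq]

lemma cont_pc (P : Polynomial ℂ) (Q : Polynomial ℂ) :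
    Continuous fun z => P.eval z * conj (Q.eval z) :=
  P.continuous.mul (Complex.continuous_conj.comp Q.continuous)

lemma hswap (ν : Measure ℂ) (f g : ℂ → ℂ) :
    ∫ z, f z * conj (g z) ∂ν = conj (∫ z, g z * conj (f z) ∂ν) := by
  rw [← integral_conj]
  congr 1; funext z
  simp only [map_mul, Complex.conj_conj]
  ring

lemma intcont {E : Type*} [NormedAddCommGroup E] (ν : Measure ℂ) [IsFiniteMeasure ν]
    (hν : ν {z : ℂ | ‖z‖ ≠ 1} = 0) (f : ℂ → E) (hf : Continuous f) :
    Integrable f ν := by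
  obtain ⟨C, hC⟩ := (isCompact_sphere (0:ℂ) 1).exists_bound_of_continuousOn hf.continuousOn
  refine Integrable.mono' (integrable_const C) hf.aestronglyMeasurable ?_
  have hae : ∀ᵐ z ∂ν, ‖z‖ = 1 := by rw [ae_iff]; exact hν
  filter_upwards [hae] with z hz
  exact hC z (by simp [Metric.mem_sphere, Complex.dist_eq, hz])

lemma poly_eq_zero_of_null (ν : Measure ℂ)
    (hsupp : {z : ℂ | ∀ ε > 0, 0 < ν (Metric.ball z ε)}.Infinite)
    (D : Polynomial ℂ) (h : ν {z | D.eval z ≠ 0} = 0) : D = 0 := by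
  by_contra hD
  have hfin : (↑D.roots.toFinset : Set ℂ).Finite := D.roots.toFinset.finite_toSet
  obtain ⟨z₀, hz₀⟩ := (hsupp.diff hfin).nonempty
  have hz0 : D.eval z₀ ≠ 0 := by
    intro h0
    exact hz₀.2 (by simp [Multiset.mem_toFinset, Polynomial.mem_roots hD, Polynomial.IsRoot, h0])
  have hopen : IsOpen {z : ℂ | D.eval z ≠ 0} := isOpen_compl_singleton.preimage D.continuous
  obtain ⟨ε, hε, hball⟩ := Metric.isOpen_iff.mp hopen z₀ hz0
  exact (hz₀.1 ε hε).ne' (measure_mono_null hball h)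

lemma span_phi (φ : ℕ → Polynomial ℂ) (j : ℕ)
    (hdeg : ∀ k < j, (φ k).natDegree = k) (hlead : ∀ k < j, (φ k).coeff k ≠ 0) :
    ∀ P : Polynomial ℂ, P.degree < (j : ℕ) → ∃ b : ℕ → ℂ,
      P = ∑ k ∈ Finset.range j, Polynomial.C (b k) * φ k := by
  induction j with
  | zero =>
    intro P hP
    refine ⟨0, ?_⟩
    simp only [Finset.range_zero, Finset.sum_empty]
    ext m
    exact (P.degree_lt_iff_coeff_zero 0).mp hP m (Nat.zero_le m)
  | succ j ih =>
    intro P hP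
    set c : ℂ := P.coeff j / (φ j).coeff j with hc
    have hlj := hlead j (Nat.lt_succ_self j)
    have hQ : (P - Polynomial.C c * φ j).degree < (j : ℕ) := by
      rw [Polynomial.degree_lt_iff_coeff_zero]
      intro m hm
      rcases eq_or_lt_of_le hm with hm' | hm'
      · simp [Polynomial.coeff_sub, Polynomial.coeff_C_mul, ← hm', hc,
          div_mul_cancel₀ _ hlj]
      · have h1 : P.coeff m = 0 :=
          (P.degree_lt_iff_coeff_zero (j+1)).mp hP m hm'
        have h2 : (φ j).coeff m = 0 :=
          Polynomial.coeff_eq_zero_of_natDegree_lt (by rw [hdeg j (Nat.lt_succ_self j)]; exact hm')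
        simp [Polynomial.coeff_sub, Polynomial.coeff_C_mul, h1, h2]
    obtain ⟨b, hb⟩ := ih (fun k hk => hdeg k (hk.trans (Nat.lt_succ_self j)))
      (fun k hk => hlead k (hk.trans (Nat.lt_succ_self j))) _ hQ
    refine ⟨Function.update b j c, ?_⟩
    rw [Finset.sum_range_succ, Function.update_self]
    have : ∑ k ∈ Finset.range j, Polynomial.C (Function.update b j c k) * φ k
        = ∑ k ∈ Finset.range j, Polynomial.C (b k) * φ k := by
      refine Finset.sum_congr rfl fun k hk => ?_
      rw [Function.update_of_ne (Finset.mem_range.mp hk).ne]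
    rw [this, ← hb]; ring

lemma int_comb {ι : Type*} (s : Finset ι) (ν : Measure ℂ) (c : ι → ℂ) (f : ι → ℂ → ℂ)
    (hf : ∀ k ∈ s, Integrable (f k) ν) :
    ∫ z, ∑ k ∈ s, c k * f k z ∂ν = ∑ k ∈ s, c k * ∫ z, f k z ∂ν := by
  rw [integral_finset_sum _ (fun k hk => (hf k hk).const_mul (c k))]
  exact Finset.sum_congr rfl fun k hk => integral_const_mul _ _

lemma int_expand (ν : Measure ℂ) [IsFiniteMeasure ν]
    (hν : ν {z : ℂ | ‖z‖ ≠ 1} = 0)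
    (P Q : Polynomial ℂ) (m : ℕ) (hQ : Q.natDegree < m) :
    ∫ z, P.eval z * conj (Q.eval z) ∂ν
      = ∑ j ∈ Finset.range m, conj (Q.coeff j) * ∫ z, P.eval z * conj ((z:ℂ) ^ j) ∂ν := by
  have hpt : ∀ z : ℂ, P.eval z * conj (Q.eval z)
      = ∑ j ∈ Finset.range m, conj (Q.coeff j) * (P.eval z * conj (z ^ j)) := by
    intro z
    rw [Polynomial.eval_eq_sum_range' hQ z, map_sum, Finset.mul_sum]
    exact Finset.sum_congr rfl fun j _ => by rw [map_mul]; ring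
  simp_rw [hpt]
  exact int_comb _ ν _ _ (fun j _ => intcont ν hν _ (by continuity))

lemma uniq_monic (ν : Measure ℂ) [IsFiniteMeasure ν]
    (hν : ν {z : ℂ | ‖z‖ ≠ 1} = 0)
    (hsupp : {z : ℂ | ∀ ε > 0, 0 < ν (Metric.ball z ε)}.Infinite)
    (n : ℕ) (P1 P2 : Polynomial ℂ)
    (h1m : P1.Monic) (h1d : P1.natDegree = n) (h2m : P2.Monic) (h2d : P2.natDegree = n)
    (h1o : ∀ j < n, ∫ z, P1.eval z * conj ((z:ℂ) ^ j) ∂ν = 0)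
    (h2o : ∀ j < n, ∫ z, P2.eval z * conj ((z:ℂ) ^ j) ∂ν = 0) : P1 = P2 := by
  set D := P1 - P2 with hDdef
  by_cases hD : D = 0
  · exact sub_eq_zero.mp hD
  have hdeq : P1.degree = P2.degree := by
    rw [Polynomial.degree_eq_natDegree h1m.ne_zero,
      Polynomial.degree_eq_natDegree h2m.ne_zero, h1d, h2d]
  have hleq : P1.leadingCoeff = P2.leadingCoeff := by
    rw [h1m.leadingCoeff, h2m.leadingCoeff]
  have hDdeg : D.degree < (n : ℕ) := by
    have := Polynomial.degree_sub_lt hdeq h1m.ne_zero hleq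
    rwa [Polynomial.degree_eq_natDegree h1m.ne_zero, h1d] at this
  have hDnat : D.natDegree < n := (Polynomial.natDegree_lt_iff_degree_lt hD).mpr hDdeg
  have hDorth : ∀ j < n, ∫ z, D.eval z * conj ((z:ℂ) ^ j) ∂ν = 0 := by
    intro j hj
    have hpt : (fun z : ℂ => D.eval z * conj ((z:ℂ) ^ j))
        = fun z => P1.eval z * conj ((z:ℂ) ^ j) - P2.eval z * conj ((z:ℂ) ^ j) := by
      funext z; rw [hDdef]; simp [Polynomial.eval_sub, sub_mul]
    rw [hpt, integral_sub (intcont ν hν _ (by continuity)) (intcont ν hν _ (by continuity)),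
      h1o j hj, h2o j hj, sub_zero]
  have h0 : ∫ z, D.eval z * conj (D.eval z) ∂ν = 0 := by
    rw [int_expand ν hν D D n hDnat]
    exact Finset.sum_eq_zero fun j hj => by
      rw [hDorth j (Finset.mem_range.mp hj), mul_zero]
  have hre : ∫ z, ‖D.eval z‖ ^ 2 ∂ν = 0 := by
    have hc2 : ∫ z, ((‖D.eval z‖^2 : ℝ) : ℂ) ∂ν = ((∫ z, ‖D.eval z‖^2 ∂ν : ℝ) : ℂ) :=
      integral_ofReal
    have hc3 : ∫ z, ((‖D.eval z‖^2 : ℝ) : ℂ) ∂ν = ∫ z, D.eval z * conj (D.eval z) ∂ν :=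
      integral_congr_ae (by filter_upwards with z; exact ofReal_norm_sq _)
    have : ((∫ z, ‖D.eval z‖^2 ∂ν : ℝ) : ℂ) = 0 := by rw [← hc2, hc3, h0]
    exact_mod_cast this
  have hae := (integral_eq_zero_iff_of_nonneg (fun z => by positivity)
    (intcont ν hν _ (by continuity))).mp hre
  have hnull : ν {z | D.eval z ≠ 0} = 0 := by
    have h' := ae_iff.mp hae
    convert h' using 2 with z
    simp [Pi.zero_apply, pow_eq_zero_iff, norm_eq_zero]
  exact absurd (poly_eq_zero_of_null ν hsupp D hnull) hD

/-- for `μ(t) = (1−t)μ + t δ_1`, the `n`-th monic orthogonal polynomial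
`Φ_n(·;μ(t))` of `μ(t)` satisfies
`‖Φ_n(·;μ(t))‖²_{μ(t)} = ‖Φ_n(·;μ)‖²_μ · (1−t)(1−t+tK_n(1,1))/(1−t+tK_{n−1}(1,1))`. -/
theorem norm_of_monic_after_mass (μ : Measure ℂ) [IsProbabilityMeasure μ]
    (hcirc : OnCircle μ)
    (hsupp : {z : ℂ | ∀ ε > 0, 0 < μ (Metric.ball z ε)}.Infinite)
    (n : ℕ) (hn : 1 ≤ n)
    (φ : ℕ → Polynomial ℂ)
    (hφdeg : ∀ j ≤ n, (φ j).natDegree = j)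
    (hφlead : ∀ j ≤ n, ∃ r : ℝ, 0 < r ∧ (φ j).coeff j = (r : ℂ))
    (hφorth : ∀ j ≤ n, ∀ k ≤ n,
      ∫ z, (φ j).eval z * conj ((φ k).eval z) ∂μ = if j = k then 1 else 0)
    (Φ : Polynomial ℂ) (hΦmonic : Φ.Monic) (hΦdeg : Φ.natDegree = n)
    (hΦorth : ∀ j < n, ∫ z, Φ.eval z * conj (z ^ j) ∂μ = 0)
    (t : ℝ) (ht : t ∈ Set.Ioo (0 : ℝ) 1)
    (μt : Measure ℂ)
    (hμt : μt = ENNReal.ofReal (1 - t) • μ + ENNReal.ofReal t • Measure.dirac (1 : ℂ))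
    (Ψ : Polynomial ℂ) (hΨmonic : Ψ.Monic) (hΨdeg : Ψ.natDegree = n)
    (hΨorth : ∀ j < n, ∫ z, Ψ.eval z * conj (z ^ j) ∂μt = 0) :
    ∫ z, ‖Ψ.eval z‖ ^ 2 ∂μt =
      (∫ z, ‖Φ.eval z‖ ^ 2 ∂μ) * (1 - t) *
        (1 - t + t * ∑ l ∈ Finset.range (n + 1), ‖(φ l).eval 1‖ ^ 2) /
        (1 - t + t * ∑ l ∈ Finset.range n, ‖(φ l).eval 1‖ ^ 2) := by
  obtain ⟨ht0, ht1⟩ := ht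
  have h1t : (0:ℝ) < 1 - t := by linarith
  have hcirc' : μ {z : ℂ | ‖z‖ ≠ 1} = 0 := hcirc
  have hms : MeasurableSet {z : ℂ | ‖z‖ ≠ 1} :=
    ((isClosed_eq continuous_norm continuous_const).measurableSet).compl
  have hdirac : Measure.dirac (1:ℂ) {z : ℂ | ‖z‖ ≠ 1} = 0 := by
    rw [Measure.dirac_apply' _ hms]; simp
  haveI hfinμt : IsFiniteMeasure μt := by
    constructor
    rw [hμt]
    simp only [Measure.add_apply, Measure.smul_apply, smul_eq_mul, measure_univ, mul_one]
    exact ENNReal.add_lt_top.mpr ⟨ENNReal.ofReal_lt_top, ENNReal.ofReal_lt_top⟩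
  have hμtcirc : μt {z : ℂ | ‖z‖ ≠ 1} = 0 := by
    rw [hμt]
    simp [Measure.add_apply, Measure.smul_apply, hcirc', hdirac]
  have hμtsupp : {z : ℂ | ∀ ε > 0, 0 < μt (Metric.ball z ε)}.Infinite := by
    refine hsupp.mono fun z hz => ?_
    intro ε hε
    rw [hμt]
    simp only [Measure.add_apply, Measure.smul_apply, smul_eq_mul]
    have h1 : 0 < ENNReal.ofReal (1 - t) * μ (Metric.ball z ε) :=
      ENNReal.mul_pos (ENNReal.ofReal_pos.mpr h1t).ne' (hz ε hε).ne'
    exact lt_of_lt_of_le h1 le_self_add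
  have hsplit : ∀ f : ℂ → ℂ, Continuous f →
      ∫ z, f z ∂μt = ((1 - t : ℝ) : ℂ) * ∫ z, f z ∂μ + ((t : ℝ) : ℂ) * f 1 := by
    intro f hf
    rw [hμt, integral_add_measure
      ((intcont μ hcirc' f hf).smul_measure ENNReal.ofReal_ne_top)
      ((intcont (Measure.dirac 1) hdirac f hf).smul_measure ENNReal.ofReal_ne_top),
      integral_smul_measure, integral_smul_measure, integral_dirac,
      ENNReal.toReal_ofReal h1t.le, ENNReal.toReal_ofReal ht0.le]
    simp [Complex.real_smul]

  -- spanning and orthogonality machinery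
  have hdegs : ∀ k < n, (φ k).natDegree = k := fun k hk => hφdeg k hk.le
  have hleadne : ∀ k ≤ n, (φ k).coeff k ≠ 0 := by
    intro k hk; obtain ⟨r, hr, he⟩ := hφlead k hk
    rw [he]; exact_mod_cast hr.ne'
  have hleads : ∀ k < n, (φ k).coeff k ≠ 0 := fun k hk => hleadne k hk.le
  have hΦdegree : Φ.degree = (n:ℕ) := by
    rw [Polynomial.degree_eq_natDegree hΦmonic.ne_zero, hΦdeg]
  have hspan : ∀ P : Polynomial ℂ, P.degree < (n:ℕ) → ∃ b : ℕ → ℂ,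
      P = ∑ k ∈ Finset.range n, Polynomial.C (b k) * φ k := span_phi φ n hdegs hleads
  have hint_phi : ∀ (b : ℕ → ℂ) (S : Polynomial ℂ),
      S = ∑ k ∈ Finset.range n, Polynomial.C (b k) * φ k →
      ∀ l ≤ n, ∫ z, S.eval z * conj ((φ l).eval z) ∂μ = if l < n then b l else 0 := by
    intro b S hS l hl
    have hpt : (fun z : ℂ => S.eval z * conj ((φ l).eval z))
        = fun z => ∑ k ∈ Finset.range n, b k * ((φ k).eval z * conj ((φ l).eval z)) := by
      funext z
      rw [hS, Polynomial.eval_finset_sum, Finset.sum_mul]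
      refine Finset.sum_congr rfl fun k _ => ?_
      simp only [Polynomial.eval_mul, Polynomial.eval_C]
      ring
    rw [hpt, int_comb _ μ _ _ (fun k _ => intcont μ hcirc' _ (cont_pc (φ k) (φ l)))]
    have hterm : ∀ k ∈ Finset.range n,
        b k * ∫ z, (φ k).eval z * conj ((φ l).eval z) ∂μ = if k = l then b k else 0 := by
      intro k hk
      rw [hφorth k (Finset.mem_range.mp hk).le l hl]
      split_ifs <;> simp
    rw [Finset.sum_congr rfl hterm, Finset.sum_ite_eq' (Finset.range n) l b]
    simp [Finset.mem_range]
  have hphi_mono : ∀ (b : ℕ → ℂ) (S : Polynomial ℂ),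
      S = ∑ k ∈ Finset.range n, Polynomial.C (b k) * φ k →
      ∀ l ≤ n, ∫ z, (φ l).eval z * conj (S.eval z) ∂μ = if l < n then conj (b l) else 0 := by
    intro b S hS l hl
    rw [hswap μ, hint_phi b S hS l hl]
    split_ifs <;> simp
  have hmono_rep : ∀ j < n, ∃ b : ℕ → ℂ,
      ((Polynomial.X : Polynomial ℂ) ^ j = ∑ k ∈ Finset.range n, Polynomial.C (b k) * φ k)
      ∧ (∑ l ∈ Finset.range n, b l * (φ l).eval 1) = 1 := by
    intro j hj
    obtain ⟨b, hb⟩ := hspan _ (by rw [Polynomial.degree_X_pow]; exact_mod_cast hj)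
    refine ⟨b, hb, ?_⟩
    have h1 := congrArg (Polynomial.eval (1:ℂ)) hb
    simp only [Polynomial.eval_pow, Polynomial.eval_X, one_pow, Polynomial.eval_finset_sum,
      Polynomial.eval_mul, Polynomial.eval_C] at h1
    exact h1.symm
  have hphi_pow : ∀ (b : ℕ → ℂ) (j : ℕ),
      ((Polynomial.X : Polynomial ℂ) ^ j = ∑ k ∈ Finset.range n, Polynomial.C (b k) * φ k) →
      ∀ l ≤ n, ∫ z, (φ l).eval z * conj ((z:ℂ) ^ j) ∂μ = if l < n then conj (b l) else 0 := by
    intro b j hb l hl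
    have h := hphi_mono b _ hb l hl
    simpa [Polynomial.eval_pow, Polynomial.eval_X] using h

  -- the kernel polynomial and the perturbed monic polynomial
  set K : Polynomial ℂ := ∑ l ∈ Finset.range n, Polynomial.C (conj ((φ l).eval 1)) * φ l
    with hKdef
  have hKeval : ∀ z : ℂ, K.eval z = ∑ l ∈ Finset.range n, conj ((φ l).eval 1) * (φ l).eval z := by
    intro z
    rw [hKdef, Polynomial.eval_finset_sum]
    exact Finset.sum_congr rfl fun l _ => by simp
  set Kn1 : ℝ := ∑ l ∈ Finset.range n, ‖(φ l).eval 1‖ ^ 2 with hKn1def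
  have hKn1nonneg : (0:ℝ) ≤ Kn1 := by
    rw [hKn1def]; exact Finset.sum_nonneg fun l _ => by positivity
  have hKeval1 : K.eval 1 = ((Kn1:ℝ) : ℂ) := by
    have hterm : ∀ l ∈ Finset.range n,
        conj ((φ l).eval 1) * (φ l).eval 1 = ((‖(φ l).eval 1‖^2 : ℝ) : ℂ) := fun l _ => by
      rw [mul_comm, ofReal_norm_sq]
    rw [hKeval 1, Finset.sum_congr rfl hterm, hKn1def]
    norm_cast
  have hKdeg : K.degree < (n : ℕ) := by
    rw [hKdef]
    refine lt_of_le_of_lt (Polynomial.degree_sum_le _ _) ?_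
    rw [Finset.sup_lt_iff (by exact_mod_cast WithBot.bot_lt_coe n)]
    intro l hl
    refine lt_of_le_of_lt ((degree_C_mul_le' _ _).trans (Polynomial.degree_le_natDegree)) ?_
    rw [hdegs l (Finset.mem_range.mp hl)]
    exact_mod_cast Finset.mem_range.mp hl
  set Φ1 : ℂ := Φ.eval 1 with hΦ1def
  set d : ℝ := 1 - t + t * Kn1 with hddef
  have hdpos : 0 < d := by rw [hddef]; nlinarith
  have hdC : ((d:ℝ):ℂ) ≠ 0 := by exact_mod_cast hdpos.ne'
  have hdCval : ((d:ℝ):ℂ) = 1 - (t:ℂ) + (t:ℂ) * ((Kn1:ℝ):ℂ) := by rw [hddef]; push_cast; ring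
  have hdC' : (1 - (t:ℂ) + (t:ℂ) * ((Kn1:ℝ):ℂ)) ≠ 0 := by rw [← hdCval]; exact hdC
  set a : ℂ := (t:ℂ) * Φ1 / ((d:ℝ):ℂ) with hadef
  set Q : Polynomial ℂ := Φ - Polynomial.C a * K with hQdef
  have hCaK : (Polynomial.C a * K).degree < Φ.degree := by
    rw [hΦdegree]; exact lt_of_le_of_lt (degree_C_mul_le' a K) hKdeg
  have hQmonic : Q.Monic := by
    have h := hΦmonic.add_of_left (q := -(Polynomial.C a * K)) (by rwa [Polynomial.degree_neg])
    rwa [← sub_eq_add_neg] at h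
  have hQdeg : Q.natDegree = n := by
    have h : Q.degree = (n:ℕ) := by
      rw [hQdef, Polynomial.degree_sub_eq_left_of_degree_lt hCaK, hΦdegree]
    exact Polynomial.natDegree_eq_of_degree_eq_some h
  have hQeval : ∀ z, Q.eval z = Φ.eval z - a * K.eval z := by
    intro z; simp [hQdef]
  have hQ1 : Q.eval 1 = Φ1 - a * ((Kn1:ℝ):ℂ) := by rw [hQeval, hKeval1, hΦ1def]

  have contPC : ∀ (P : Polynomial ℂ) (j : ℕ),
      Continuous fun z : ℂ => P.eval z * conj ((z:ℂ) ^ j) := fun P j =>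
    P.continuous.mul (Complex.continuous_conj.comp (continuous_pow j))
  -- integrals of the kernel against monomials
  have hKpt : ∀ m : ℕ, (fun z : ℂ => K.eval z * conj ((z:ℂ) ^ m))
      = fun z => ∑ l ∈ Finset.range n, conj ((φ l).eval 1) * ((φ l).eval z * conj ((z:ℂ) ^ m)) := by
    intro m
    funext z
    rw [hKeval z, Finset.sum_mul]
    exact Finset.sum_congr rfl fun l _ => by ring
  have hKj : ∀ j < n, ∫ z, K.eval z * conj ((z:ℂ) ^ j) ∂μ = 1 := by
    intro j hj
    obtain ⟨b, hb, hb1⟩ := hmono_rep j hj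
    rw [hKpt j, int_comb _ μ _ _ (fun l _ => intcont μ hcirc' _ (contPC (φ l) _))]
    have hterm : ∀ l ∈ Finset.range n,
        conj ((φ l).eval 1) * ∫ z, (φ l).eval z * conj ((z:ℂ) ^ j) ∂μ
          = conj (b l * (φ l).eval 1) := by
      intro l hl
      have hln := Finset.mem_range.mp hl
      rw [hphi_pow b j hb l hln.le, if_pos hln, map_mul]
      ring
    rw [Finset.sum_congr rfl hterm, ← map_sum, hb1, map_one]
  have hΦorthφ : ∀ l < n, ∫ z, Φ.eval z * conj ((φ l).eval z) ∂μ = 0 := by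
    intro l hl
    rw [int_expand μ hcirc' Φ (φ l) n (by rw [hφdeg l hl.le]; exact hl)]
    exact Finset.sum_eq_zero fun j hj => by rw [hΦorth j (Finset.mem_range.mp hj), mul_zero]
  have hXnΦ : ((Polynomial.X : Polynomial ℂ) ^ n - Φ).degree < (n:ℕ) := by
    have hdeq : ((Polynomial.X : Polynomial ℂ) ^ n).degree = Φ.degree := by
      rw [Polynomial.degree_X_pow, hΦdegree]
    have hlceq : ((Polynomial.X : Polynomial ℂ) ^ n).leadingCoeff = Φ.leadingCoeff := by
      rw [(Polynomial.monic_X_pow n).leadingCoeff, hΦmonic.leadingCoeff]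
    have h := Polynomial.degree_sub_lt hdeq
      (pow_ne_zero n (Polynomial.X_ne_zero (R := ℂ))) hlceq
    rwa [Polynomial.degree_X_pow] at h
  obtain ⟨c, hcrep⟩ := hspan _ hXnΦ
  have hc1 : ∑ l ∈ Finset.range n, c l * (φ l).eval 1 = 1 - Φ1 := by
    have h1 := congrArg (Polynomial.eval (1:ℂ)) hcrep
    simp only [Polynomial.eval_sub, Polynomial.eval_pow, Polynomial.eval_X, one_pow,
      Polynomial.eval_finset_sum, Polynomial.eval_mul, Polynomial.eval_C] at h1
    rw [← h1, hΦ1def]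
  have hphi_n : ∀ l < n, ∫ z, (φ l).eval z * conj ((z:ℂ) ^ n) ∂μ = conj (c l) := by
    intro l hl
    have hinner : ∫ z, (z:ℂ) ^ n * conj ((φ l).eval z) ∂μ = c l := by
      have hpt : (fun z : ℂ => (z:ℂ) ^ n * conj ((φ l).eval z))
          = fun z => Φ.eval z * conj ((φ l).eval z)
            + ((Polynomial.X : Polynomial ℂ) ^ n - Φ).eval z * conj ((φ l).eval z) := by
        funext z
        simp only [Polynomial.eval_sub, Polynomial.eval_pow, Polynomial.eval_X]
        ring
      rw [hpt, integral_add (intcont μ hcirc' _ (cont_pc Φ (φ l)))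
        (intcont μ hcirc' _ (cont_pc _ (φ l))), hΦorthφ l hl,
        hint_phi c _ hcrep l hl.le, if_pos hl, zero_add]
    rw [hswap μ, hinner]
  have hKn : ∫ z, K.eval z * conj ((z:ℂ) ^ n) ∂μ = conj (1 - Φ1) := by
    rw [hKpt n, int_comb _ μ _ _ (fun l _ => intcont μ hcirc' _ (contPC (φ l) _))]
    have hterm : ∀ l ∈ Finset.range n,
        conj ((φ l).eval 1) * ∫ z, (φ l).eval z * conj ((z:ℂ) ^ n) ∂μ
          = conj (c l * (φ l).eval 1) := by
      intro l hl
      rw [hphi_n l (Finset.mem_range.mp hl), map_mul]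
      ring
    rw [Finset.sum_congr rfl hterm, ← map_sum, hc1]
  have hQint : ∀ j : ℕ, ∫ z, Q.eval z * conj ((z:ℂ) ^ j) ∂μ
      = ∫ z, Φ.eval z * conj ((z:ℂ) ^ j) ∂μ - a * ∫ z, K.eval z * conj ((z:ℂ) ^ j) ∂μ := by
    intro j
    have hpt : (fun z : ℂ => Q.eval z * conj ((z:ℂ) ^ j))
        = fun z => Φ.eval z * conj ((z:ℂ) ^ j) - a * (K.eval z * conj ((z:ℂ) ^ j)) := by
      funext z; rw [hQeval]; ring
    rw [hpt, integral_sub (intcont μ hcirc' _ (contPC Φ j))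
      ((intcont μ hcirc' _ (contPC K j)).const_mul a), integral_const_mul]
  have hQorthμt : ∀ j < n, ∫ z, Q.eval z * conj ((z:ℂ) ^ j) ∂μt = 0 := by
    intro j hj
    rw [hsplit (fun z => Q.eval z * conj ((z:ℂ) ^ j)) (contPC Q j), hQint j,
      hΦorth j hj, hKj j hj]
    simp only [one_pow, map_one, mul_one]
    rw [hQ1, hadef, hdCval]
    field_simp
    push_cast
    ring
  have hΨQ : Ψ = Q :=
    uniq_monic μt hμtcirc hμtsupp n Ψ Q hΨmonic hΨdeg hQmonic hQdeg hΨorth hQorthμt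

  -- identification of Φ with the normalized orthonormal polynomial
  obtain ⟨r, hr, hrc⟩ := hφlead n le_rfl
  have hrC : ((r:ℝ):ℂ) ≠ 0 := by exact_mod_cast hr.ne'
  set P2 : Polynomial ℂ := Polynomial.C (((r:ℝ):ℂ)⁻¹) * φ n with hP2def
  have hP2coeff : P2.coeff n = 1 := by
    rw [hP2def, Polynomial.coeff_C_mul, hrc, inv_mul_cancel₀ hrC]
  have hP2nd : P2.natDegree ≤ n := (Polynomial.natDegree_C_mul_le _ _).trans (hφdeg n le_rfl).le
  have hP2monic : P2.Monic :=
    Polynomial.monic_of_natDegree_le_of_coeff_eq_one n hP2nd hP2coeff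
  have hP2deg : P2.natDegree = n :=
    le_antisymm hP2nd (Polynomial.le_natDegree_of_ne_zero (by rw [hP2coeff]; exact one_ne_zero))
  have hP2orth : ∀ j < n, ∫ z, P2.eval z * conj ((z:ℂ) ^ j) ∂μ = 0 := by
    intro j hj
    obtain ⟨b, hb, _⟩ := hmono_rep j hj
    have hpt : (fun z : ℂ => P2.eval z * conj ((z:ℂ) ^ j))
        = fun z => ((r:ℝ):ℂ)⁻¹ * ((φ n).eval z * conj ((z:ℂ) ^ j)) := by
      funext z
      rw [hP2def]
      simp only [Polynomial.eval_mul, Polynomial.eval_C]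
      ring
    rw [hpt, integral_const_mul, hphi_pow b j hb n le_rfl, if_neg (lt_irrefl n), mul_zero]
  have hΦP2 : Φ = P2 :=
    uniq_monic μ hcirc' hsupp n Φ P2 hΦmonic hΦdeg hP2monic hP2deg hΦorth hP2orth
  set N : ℝ := ∫ z, ‖Φ.eval z‖ ^ 2 ∂μ with hNdef
  have hNC : ((N:ℝ):ℂ) = ∫ z, Φ.eval z * conj (Φ.eval z) ∂μ := by
    have h1 : ∫ z, ((‖Φ.eval z‖ ^ 2 : ℝ) : ℂ) ∂μ = ((N:ℝ):ℂ) := by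
      rw [hNdef]; exact integral_ofReal
    rw [← h1]
    exact integral_congr_ae (by filter_upwards with z; exact ofReal_norm_sq _)
  have hNval : ((N:ℝ):ℂ) = ((r:ℝ):ℂ)⁻¹ * ((r:ℝ):ℂ)⁻¹ := by
    rw [hNC]
    have hpt : (fun z : ℂ => Φ.eval z * conj (Φ.eval z))
        = fun z => (((r:ℝ):ℂ)⁻¹ * conj (((r:ℝ):ℂ)⁻¹))
            * ((φ n).eval z * conj ((φ n).eval z)) := by
      funext z
      rw [hΦP2, hP2def]
      simp only [Polynomial.eval_mul, Polynomial.eval_C, map_mul]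
      ring
    rw [hpt, integral_const_mul, hφorth n le_rfl n le_rfl, if_pos rfl, mul_one,
      map_inv₀, Complex.conj_ofReal]
  have hΦ1val : Φ1 = ((r:ℝ):ℂ)⁻¹ * (φ n).eval 1 := by
    rw [hΦ1def, hΦP2, hP2def]
    simp
  have hΦ1sq : Φ1 * conj Φ1 = ((N:ℝ):ℂ) * ((‖(φ n).eval 1‖ ^ 2 : ℝ) : ℂ) := by
    rw [hΦ1val, hNval, ofReal_norm_sq, map_mul, map_inv₀, Complex.conj_ofReal]
    ring
  -- the complex norm identity over μt
  have hnorm : ((∫ z, ‖Ψ.eval z‖ ^ 2 ∂μt : ℝ) : ℂ) = ∫ z, Ψ.eval z * conj (Ψ.eval z) ∂μt := by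
    have h1 : ∫ z, ((‖Ψ.eval z‖ ^ 2 : ℝ) : ℂ) ∂μt = ((∫ z, ‖Ψ.eval z‖ ^ 2 ∂μt : ℝ) : ℂ) :=
      integral_ofReal
    rw [← h1]
    exact integral_congr_ae (by filter_upwards with z; exact ofReal_norm_sq _)
  have hΨn : ∫ z, Ψ.eval z * conj (Ψ.eval z) ∂μt = ∫ z, Ψ.eval z * conj ((z:ℂ) ^ n) ∂μt := by
    rw [int_expand μt hμtcirc Ψ Ψ (n+1) (by rw [hΨdeg]; exact Nat.lt_succ_self n),
      Finset.sum_range_succ,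
      Finset.sum_eq_zero (fun j hj => by rw [hΨorth j (Finset.mem_range.mp hj), mul_zero]),
      zero_add]
    have hcoeff : Ψ.coeff n = 1 := by rw [← hΨdeg]; exact hΨmonic.coeff_natDegree
    rw [hcoeff, map_one, one_mul]
  have hΦn_int : ∫ z, Φ.eval z * conj ((z:ℂ) ^ n) ∂μ = ((N:ℝ):ℂ) := by
    have h := int_expand μ hcirc' Φ Φ (n+1) (by rw [hΦdeg]; exact Nat.lt_succ_self n)
    rw [Finset.sum_range_succ,
      Finset.sum_eq_zero (fun j hj => by rw [hΦorth j (Finset.mem_range.mp hj), mul_zero]),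
      zero_add] at h
    have hcoeff : Φ.coeff n = 1 := by rw [← hΦdeg]; exact hΦmonic.coeff_natDegree
    rw [hcoeff, map_one, one_mul] at h
    rw [← h]
    exact hNC.symm
  have hQn_μ : ∫ z, Q.eval z * conj ((z:ℂ) ^ n) ∂μ = ((N:ℝ):ℂ) - a * conj (1 - Φ1) := by
    rw [hQint n, hΦn_int, hKn]
  have hQn_μt : ∫ z, Q.eval z * conj ((z:ℂ) ^ n) ∂μt
      = ((1 - t : ℝ):ℂ) * (((N:ℝ):ℂ) - a * conj (1 - Φ1)) + ((t:ℝ):ℂ) * Q.eval 1 := by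
    rw [hsplit (fun z => Q.eval z * conj ((z:ℂ) ^ n)) (contPC Q n), hQn_μ]
    simp only [one_pow, map_one, mul_one]
  have hSn : (∑ l ∈ Finset.range (n+1), ‖(φ l).eval 1‖ ^ 2 : ℝ) = Kn1 + ‖(φ n).eval 1‖ ^ 2 := by
    rw [Finset.sum_range_succ, hKn1def]
  have hfinal : ((∫ z, ‖Ψ.eval z‖ ^ 2 ∂μt : ℝ) : ℂ)
      = ((N * (1 - t) * (1 - t + t * (∑ l ∈ Finset.range (n+1), ‖(φ l).eval 1‖ ^ 2)) / d : ℝ) : ℂ) := by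
    rw [hnorm, hΨn, hΨQ, hQn_μt, hQ1, hSn, hadef, hdCval]
    have hx : Φ1 * conj Φ1 = ((N:ℝ):ℂ) * (((‖(φ n).eval 1‖ : ℝ):ℂ)) ^ 2 := by
      rw [hΦ1sq]; push_cast; ring
    push_cast
    rw [hdCval]
    field_simp
    simp only [map_sub, map_one]
    linear_combination (1 - (t:ℂ)) * (t:ℂ) * hx
  rw [show (1 - t + t * ∑ l ∈ Finset.range n, ‖(φ l).eval 1‖ ^ 2 : ℝ) = d from rfl] at *
  exact_mod_cast hfinal
end

section
/- Let δ > 0, m > 0, n ≥ 1, and let σ be the measure on the unit circle 𝕋 given by dσ = (δ/(2π))·dθ + m·Σ_{k=1}^{n} δ_{ε_k}, where ε_k = e^{2πik/(n+1)} for k = 1,…,n. Then the polynomial Φ_n(z) = (m/(δ+m))·(1 + z + … + z^n) + (δ/(δ+m))·z^n is monic of degree n and satisfies: (i) ∫_𝕋 Φ_n(z)·conj(z^j) dσ(z) = 0 for j = 0,…,n−1; (ii) Φ_n(1) = 1 + mn/(δ+m) = sup_{z∈𝕋}|Φ_n(z)|; and (iii) ∫_𝕋 |Φ_n|² dσ =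 δ·(1 + mn/(δ+m)). -/
open MeasureTheory Polynomial ComplexConjugate

noncomputable def arcMeasure : Measure ℂ :=
  (volume.restrict (Set.Ioc (-Real.pi) Real.pi)).map (fun θ : ℝ => Complex.exp (Complex.I * θ))

lemma circle_cont : Continuous (fun θ : ℝ => Complex.exp (Complex.I * θ)) :=
  Complex.continuous_exp.comp (continuous_const.mul Complex.continuous_ofReal)

lemma integral_arcMeasure (f : ℂ → ℂ) (hf : Continuous f) :
    ∫ z, f z ∂arcMeasure
      = ∫ θ in Set.Ioc (-Real.pi) Real.pi, f (Complex.exp (Complex.I * θ)) := by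
  unfold arcMeasure
  exact integral_map circle_cont.aemeasurable hf.aestronglyMeasurable

lemma integrable_arcMeasure (f : ℂ → ℂ) (hf : Continuous f) :
    Integrable f arcMeasure := by
  unfold arcMeasure
  rw [integrable_map_measure hf.aestronglyMeasurable circle_cont.aemeasurable]
  exact (hf.comp circle_cont).integrableOn_Ioc

lemma conj_pow_exp (θ : ℝ) (a b : ℕ) :
    Complex.exp (Complex.I * θ) ^ a * conj (Complex.exp (Complex.I * θ) ^ b)
      = Complex.exp (Complex.I * θ * ((a : ℂ) - (b : ℂ))) := by
  rw [← Complex.exp_nat_mul, ← Complex.exp_nat_mul, ← Complex.exp_conj, ← Complex.exp_add]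
  congr 1
  have : conj ((Complex.I * θ) : ℂ) = -(Complex.I * θ) := by
    simp [map_mul, Complex.conj_ofReal]
  rw [map_mul, this, Complex.conj_natCast]
  push_cast
  ring

lemma E_int (k : ℤ) :
    ∫ θ in Set.Ioc (-Real.pi) Real.pi, Complex.exp (Complex.I * θ * k)
      = if k = 0 then ((2 * Real.pi : ℝ) : ℂ) else 0 := by
  have hle : (-Real.pi) ≤ Real.pi := by linarith [Real.pi_pos]
  rw [← intervalIntegral.integral_of_le hle]
  rcases eq_or_ne k 0 with hk | hk
  · subst hk
    simp
    push_cast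
    ring
  · rw [if_neg hk]
    have hc : (Complex.I * k) ≠ 0 := by
      simp [Complex.I_ne_zero, Complex.ext_iff]
      exact_mod_cast hk
    have : ∀ θ : ℝ, Complex.I * θ * k = (Complex.I * k) * θ := by intro θ; ring
    simp_rw [this]
    rw [integral_exp_mul_complex hc]
    have : Complex.exp (Complex.I * k * Real.pi) = Complex.exp (Complex.I * k * (-Real.pi : ℝ)) := by
      rw [show (Complex.I * k * ((-Real.pi : ℝ) : ℂ)) = Complex.I * k * (Real.pi : ℂ) + (-k : ℤ) * (2 * Real.pi * Complex.I) by push_cast; ring,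
        Complex.exp_add, Complex.exp_int_mul_two_pi_mul_I, mul_one]
    rw [this, sub_self, zero_div]

lemma arc_moment (a b : ℕ) :
    ∫ z, z ^ a * conj (z ^ b) ∂arcMeasure
      = if a = b then ((2 * Real.pi : ℝ) : ℂ) else 0 := by
  rw [integral_arcMeasure _ (by continuity)]
  simp_rw [conj_pow_exp]
  have h := E_int ((a : ℤ) - b)
  push_cast at h
  rw [h]
  simp only [sub_eq_zero, Int.natCast_inj]
  split_ifs
  · push_cast; ring
  · rfl

lemma sum_Icc_pow_eq_neg_one {n : ℕ} (ζ : ℂ) (h1 : ζ ^ (n + 1) = 1) (h2 : ζ ≠ 1) :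
    ∑ k ∈ Finset.Icc 1 n, ζ ^ k = -1 := by
  have h0 : ∑ k ∈ Finset.range (n + 1), ζ ^ k = 0 := by
    rw [geom_sum_eq h2, h1, sub_self, zero_div]
  have hr : Finset.range (n + 1) = insert 0 (Finset.Icc 1 n) := by
    ext x
    simp [Nat.lt_succ_iff]
    omega
  rw [hr, Finset.sum_insert (by simp)] at h0
  simp at h0
  linear_combination h0

/-- for `dσ = (δ/(2π))dθ + m Σ_{k=1}^n δ_{ε_k}` with `ε_k` the nontrivial
`(n+1)`-st roots of unity, the polynomial
`Φ_n = (m/(δ+m))(1+z+…+z^n) + (δ/(δ+m)) z^n` is monic of degree `n`, orthogonal to `z^j`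
for `j < n`, attains its sup-norm `1 + mn/(δ+m)` at `z = 1`, and
`∫|Φ_n|² dσ = δ(1 + mn/(δ+m))`. -/
theorem explicit_extremal_polynomial (δ m : ℝ) (hδ : 0 < δ) (hm : 0 < m)
    (n : ℕ) (hn : 1 ≤ n)
    (ε : ℕ → ℂ)
    (hε : ∀ k, ε k = Complex.exp (2 * Real.pi * Complex.I * k / (n + 1)))
    (σ : Measure ℂ)
    (hσ : σ = ENNReal.ofReal (δ / (2 * Real.pi)) • arcMeasure +
      ∑ k ∈ Finset.Icc 1 n, ENNReal.ofReal m • Measure.dirac (ε k))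
    (Φ : Polynomial ℂ)
    (hΦ : Φ = Polynomial.C ((m / (δ + m) : ℝ) : ℂ) * (∑ j ∈ Finset.range (n + 1), X ^ j) +
      Polynomial.C ((δ / (δ + m) : ℝ) : ℂ) * X ^ n) :
    Φ.Monic ∧ Φ.natDegree = n ∧
    (∀ j < n, ∫ z, Φ.eval z * conj (z ^ j) ∂σ = 0) ∧
    Φ.eval 1 = ((1 + m * n / (δ + m) : ℝ) : ℂ) ∧
    (∀ z : ℂ, ‖z‖ = 1 → ‖Φ.eval z‖ ≤ 1 + m * n / (δ + m)) ∧
    ∫ z, ‖Φ.eval z‖ ^ 2 ∂σ = δ * (1 + m * n / (δ + m)) := by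
  have hδm : (0:ℝ) < δ + m := by linarith
  have hδm' : (δ + m : ℝ) ≠ 0 := ne_of_gt hδm
  set c : ℝ := m / (δ + m) with hc
  set d : ℝ := δ / (δ + m) with hd
  have hc0 : 0 < c := by positivity
  have hd0 : 0 < d := by positivity
  have hcd : c + d = 1 := by rw [hc, hd]; field_simp; ring
  -- coefficient function
  set F : ℕ → ℂ := fun i => (((if i = n then c + d else c) : ℝ) : ℂ) with hF
  have hFconj : ∀ i, conj (F i) = F i := fun i => Complex.conj_ofReal _
  have hevalF : ∀ z : ℂ, Φ.eval z = ∑ i ∈ Finset.range (n + 1), F i * z ^ i := by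
    intro z
    rw [hΦ]
    simp only [eval_add, eval_mul, eval_C, eval_finset_sum, eval_pow, eval_X]
    rw [Finset.mul_sum, Finset.sum_range_succ, Finset.sum_range_succ]
    have h1 : ∀ i ∈ Finset.range n, (↑c : ℂ) * z ^ i = F i * z ^ i := by
      intro i hi
      rw [hF]
      simp [Nat.ne_of_lt (Finset.mem_range.mp hi)]
    rw [Finset.sum_congr rfl h1, hF]
    simp only [if_pos rfl]
    push_cast
    ring
  -- degree and monicity
  have hcoeffn : Φ.coeff n = 1 := by
    rw [hΦ]
    simp only [coeff_add, coeff_C_mul, finset_sum_coeff, coeff_X_pow, if_pos rfl]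
    rw [Finset.sum_ite_eq (Finset.range (n + 1)) n (fun _ => (1:ℂ)),
      if_pos (Finset.mem_range.mpr (Nat.lt_succ_self n))]
    push_cast
    rw [mul_one, mul_one]
    norm_cast
  have hdegle : Φ.natDegree ≤ n := by
    rw [hΦ]
    refine le_trans (natDegree_add_le _ _) (max_le ?_ ?_)
    · refine le_trans (natDegree_C_mul_le _ _) ?_
      refine natDegree_sum_le_of_forall_le _ _ fun i hi => ?_
      rw [natDegree_X_pow]
      exact Nat.lt_succ_iff.mp (Finset.mem_range.mp hi)
    · exact le_trans (natDegree_C_mul_le _ _) (le_of_eq (natDegree_X_pow n))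
  have hdeg : Φ.natDegree = n :=
    le_antisymm hdegle (le_natDegree_of_ne_zero (by rw [hcoeffn]; exact one_ne_zero))
  have hmonic : Φ.Monic := by
    unfold Polynomial.Monic Polynomial.leadingCoeff
    rw [hdeg, hcoeffn]
  -- roots of unity
  set ω : ℂ := Complex.exp (2 * Real.pi * Complex.I / ((n : ℂ) + 1)) with hωdef
  have hω : IsPrimitiveRoot ω (n + 1) := by
    have h := Complex.isPrimitiveRoot_exp (n + 1) (Nat.succ_ne_zero n)
    convert h using 3
    push_cast
    ring
  have hεω : ∀ k, ε k = ω ^ k := by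
    intro k
    rw [hε k, hωdef, ← Complex.exp_nat_mul]
    congr 1
    push_cast
    ring
  have hroot : ∀ k, ε k ^ (n + 1) = 1 := by
    intro k
    rw [hεω k, ← pow_mul, mul_comm, pow_mul, hω.pow_eq_one, one_pow]
  have hne1 : ∀ k ∈ Finset.Icc 1 n, ε k ≠ 1 := by
    intro k hk
    rw [hεω k, Ne, hω.pow_eq_one_iff_dvd]
    simp only [Finset.mem_Icc] at hk
    intro hdvd
    have := Nat.le_of_dvd (by omega) hdvd
    omega
  have habs : ∀ k, ‖ε k‖ = 1 := by
    intro k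
    have h : ε k = Complex.exp (((2 * Real.pi * k / (n + 1) : ℝ) : ℂ) * Complex.I) := by
      rw [hε k]
      congr 1
      push_cast
      ring
    rw [h, Complex.norm_exp_ofReal_mul_I]
  have hconj : ∀ k, conj (ε k) = ε k ^ n := by
    intro k
    rw [← Complex.inv_eq_conj (by rw [habs k])]
    have h : ε k * ε k ^ n = 1 := by rw [← pow_succ', hroot k]
    exact (eq_inv_of_mul_eq_one_right h).symm
  -- Φ at the roots
  have hΦroot : ∀ k ∈ Finset.Icc 1 n, Φ.eval (ε k) = (d : ℂ) * ε k ^ n := by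
    intro k hk
    have hg : ∑ j ∈ Finset.range (n + 1), ε k ^ j = 0 := by
      rw [geom_sum_eq (hne1 k hk), hroot k, sub_self, zero_div]
    rw [hΦ]
    simp only [eval_add, eval_mul, eval_C, eval_finset_sum, eval_pow, eval_X]
    rw [hg, mul_zero, zero_add]
  -- integrability and splitting of σ
  have hdiracInt : ∀ (f : ℂ → ℂ), Continuous f → ∀ a : ℂ, Integrable f (Measure.dirac a) := by
    intro f hf a
    refine ⟨hf.aestronglyMeasurable, ?_⟩
    rw [hasFiniteIntegral_iff_norm, MeasureTheory.lintegral_dirac]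
    exact ENNReal.ofReal_lt_top
  have hint : ∀ f : ℂ → ℂ, Continuous f → Integrable f σ := by
    intro f hf
    rw [hσ, integrable_add_measure]
    refine ⟨(integrable_arcMeasure f hf).smul_measure ENNReal.ofReal_ne_top, ?_⟩
    rw [integrable_finset_sum_measure]
    intro k _
    exact (hdiracInt f hf (ε k)).smul_measure ENNReal.ofReal_ne_top
  have hsplit : ∀ f : ℂ → ℂ, Continuous f →
      ∫ z, f z ∂σ = ((δ / (2 * Real.pi) : ℝ) : ℂ) * (∫ z, f z ∂arcMeasure) +
        (m : ℂ) * ∑ k ∈ Finset.Icc 1 n, f (ε k) := by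
    intro f hf
    have h1 : Integrable f (ENNReal.ofReal (δ / (2 * Real.pi)) • arcMeasure) :=
      (integrable_arcMeasure f hf).smul_measure ENNReal.ofReal_ne_top
    have h2 : ∀ k ∈ Finset.Icc 1 n, Integrable f (ENNReal.ofReal m • Measure.dirac (ε k)) :=
      fun k _ => (hdiracInt f hf (ε k)).smul_measure ENNReal.ofReal_ne_top
    rw [hσ, integral_add_measure h1 (integrable_finset_sum_measure.2 h2),
      integral_finset_sum_measure h2, integral_smul_measure]
    simp_rw [integral_smul_measure, integral_dirac]
    rw [ENNReal.toReal_ofReal (by positivity)]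
    simp_rw [ENNReal.toReal_ofReal hm.le, Complex.real_smul, ← Finset.mul_sum]
  -- arc integrals of Φ against z^j
  have harcΦ : ∀ j, j ∈ Finset.range (n + 1) →
      ∫ z, Φ.eval z * conj (z ^ j) ∂arcMeasure = ((2 * Real.pi : ℝ) : ℂ) * F j := by
    intro j hj
    simp_rw [hevalF, Finset.sum_mul, mul_assoc]
    rw [integral_finset_sum _ (fun i _ => (integrable_arcMeasure _
      (continuous_const.mul ((continuous_pow i).mul
        (Complex.continuous_conj.comp (continuous_pow j))))).congr (by rfl))]
    simp_rw [MeasureTheory.integral_const_mul, arc_moment]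
    simp_rw [mul_ite, mul_zero]
    rw [Finset.sum_ite_eq' (Finset.range (n + 1)) j (fun i => F i * ((2 * Real.pi : ℝ) : ℂ)),
      if_pos hj, mul_comm]
  -- orthogonality
  have horth : ∀ j < n, ∫ z, Φ.eval z * conj (z ^ j) ∂σ = 0 := by
    intro j hj
    have hcont : Continuous fun z : ℂ => Φ.eval z * conj (z ^ j) :=
      (Φ.continuous).mul (Complex.continuous_conj.comp (continuous_pow j))
    rw [hsplit _ hcont, harcΦ j (Finset.mem_range.mpr (by omega))]
    have hFj : F j = (c : ℂ) := by rw [hF]; simp [Nat.ne_of_lt hj]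
    -- Dirac sum
    have hsum : ∑ k ∈ Finset.Icc 1 n, Φ.eval (ε k) * conj (ε k ^ j) = (d : ℂ) * (-1) := by
      have hζ : ∀ k ∈ Finset.Icc 1 n,
          Φ.eval (ε k) * conj (ε k ^ j) = (d : ℂ) * (ω ^ (n * (j + 1))) ^ k := by
        intro k hk
        rw [hΦroot k hk, map_pow, hconj k, hεω k]
        rw [← pow_mul, ← pow_mul, ← pow_mul, mul_assoc]
        congr 2
        rw [← pow_add]
        congr 1
        ring
      rw [Finset.sum_congr rfl hζ, ← Finset.mul_sum]
      congr 1
      refine sum_Icc_pow_eq_neg_one _ ?_ ?_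
      · rw [← pow_mul, mul_comm, pow_mul, hω.pow_eq_one, one_pow]
      · rw [Ne, hω.pow_eq_one_iff_dvd]
        intro hdvd
        have hcop : Nat.Coprime (n + 1) n := by
          rw [add_comm]
          exact Nat.coprime_add_self_left.mpr (Nat.coprime_one_left n)
        have h2 := hcop.dvd_of_dvd_mul_left hdvd
        have := Nat.le_of_dvd (by omega) h2
        omega
    rw [hsum, hFj]
    rw [hc, hd]
    have hπC : ((Real.pi : ℝ) : ℂ) ≠ 0 := by exact_mod_cast Real.pi_ne_zero
    have hdm : ((δ : ℂ) + (m : ℂ)) ≠ 0 := by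
      rw [← Complex.ofReal_add]
      exact_mod_cast hδm'
    push_cast
    field_simp
    ring
  -- evaluation at 1
  have heval1 : Φ.eval 1 = ((1 + m * n / (δ + m) : ℝ) : ℂ) := by
    rw [hΦ]
    simp only [eval_add, eval_mul, eval_C, eval_finset_sum, eval_pow, eval_X, one_pow,
      Finset.sum_const, Finset.card_range, nsmul_eq_mul, mul_one]
    rw [hc, hd]
    have hdm : ((δ : ℂ) + (m : ℂ)) ≠ 0 := by
      rw [← Complex.ofReal_add]
      exact_mod_cast hδm'
    push_cast
    field_simp
    ring
  -- sup bound
  have hsup : ∀ z : ℂ, ‖z‖ = 1 → ‖Φ.eval z‖ ≤ 1 + m * n / (δ + m) := by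
    intro z hz
    rw [hevalF z]
    refine le_trans (norm_sum_le _ _) ?_
    have hterm : ∀ i ∈ Finset.range (n + 1), ‖F i * z ^ i‖ = ‖F i‖ := by
      intro i _
      rw [norm_mul, norm_pow, hz, one_pow, mul_one]
    rw [Finset.sum_congr rfl hterm, Finset.sum_range_succ]
    have h1 : ∀ i ∈ Finset.range n, ‖F i‖ = c := by
      intro i hi
      rw [hF]
      simp only [Nat.ne_of_lt (Finset.mem_range.mp hi), if_false]
      rw [Complex.norm_real, Real.norm_eq_abs, abs_of_pos hc0]
    rw [Finset.sum_congr rfl h1, Finset.sum_const, Finset.card_range, nsmul_eq_mul]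
    have h2 : ‖F n‖ = 1 := by
      rw [hF]
      simp only [if_pos rfl, hcd]
      norm_num
    rw [h2, hc]
    apply le_of_eq
    field_simp
    ring
  -- squared-norm integral
  have hΦcont : Continuous fun z : ℂ => Φ.eval z := Φ.continuous
  have hgcont : Continuous fun z : ℂ => Φ.eval z * conj (Φ.eval z) :=
    hΦcont.mul (Complex.continuous_conj.comp hΦcont)
  have hL2 : ∫ z, ‖Φ.eval z‖ ^ 2 ∂σ = δ * (1 + m * n / (δ + m)) := by
    have hre : ∫ z, ‖Φ.eval z‖ ^ 2 ∂σ = (∫ z, Φ.eval z * conj (Φ.eval z) ∂σ).re := by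
      have h := integral_re (hint _ hgcont)
      simp only [RCLike.re_to_complex] at h
      rw [← h]
      congr 1
      funext z
      rw [Complex.mul_conj]
      simp only [Complex.normSq_eq_norm_sq]
      norm_cast
    -- arc part
    have harc2 : ∫ z, Φ.eval z * conj (Φ.eval z) ∂arcMeasure
        = ((2 * Real.pi : ℝ) : ℂ) * ((n : ℂ) * (c : ℂ) ^ 2 + 1) := by
      have hexp : ∀ z : ℂ, Φ.eval z * conj (Φ.eval z)
          = ∑ j ∈ Finset.range (n + 1), conj (F j) * (Φ.eval z * conj (z ^ j)) := by
        intro z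
        conv_lhs => rw [show conj (Φ.eval z) = ∑ j ∈ Finset.range (n + 1), conj (F j) * conj (z ^ j) by
          rw [hevalF z, map_sum]; exact Finset.sum_congr rfl fun j _ => by rw [map_mul]]
        rw [Finset.mul_sum]
        exact Finset.sum_congr rfl fun j _ => by ring
      simp_rw [hexp]
      rw [integral_finset_sum _ (fun j _ => (integrable_arcMeasure _
        (continuous_const.mul (hΦcont.mul
          (Complex.continuous_conj.comp (continuous_pow j))))).congr (by rfl))]
      simp_rw [MeasureTheory.integral_const_mul]
      have : ∀ j ∈ Finset.range (n + 1),
          conj (F j) * ∫ z, Φ.eval z * conj (z ^ j) ∂arcMeasure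
            = ((2 * Real.pi : ℝ) : ℂ) * (F j * F j) := by
        intro j hj
        rw [harcΦ j hj, hFconj]
        ring
      rw [Finset.sum_congr rfl this, ← Finset.mul_sum]
      congr 1
      rw [Finset.sum_range_succ]
      have h1 : ∀ j ∈ Finset.range n, F j * F j = ((c ^ 2 : ℝ) : ℂ) := by
        intro j hj
        rw [hF]
        simp only [Nat.ne_of_lt (Finset.mem_range.mp hj), if_false]
        push_cast
        ring
      rw [Finset.sum_congr rfl h1, Finset.sum_const, Finset.card_range, nsmul_eq_mul, hF]
      simp only [if_pos rfl, hcd]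
      push_cast
      ring
    -- dirac part
    have hdir2 : ∀ k ∈ Finset.Icc 1 n,
        Φ.eval (ε k) * conj (Φ.eval (ε k)) = ((d ^ 2 : ℝ) : ℂ) := by
      intro k hk
      rw [Complex.mul_conj, Complex.normSq_eq_norm_sq]
      rw [hΦroot k hk, norm_mul, norm_pow, habs k, one_pow, mul_one, Complex.norm_real, Real.norm_eq_abs,
        abs_of_pos hd0]
    have htot : ∫ z, Φ.eval z * conj (Φ.eval z) ∂σ
        = ((δ / (2 * Real.pi) * (2 * Real.pi * (n * c ^ 2 + 1)) + m * (n * d ^ 2) : ℝ) : ℂ) := by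
      rw [hsplit _ hgcont, harc2, Finset.sum_congr rfl hdir2, Finset.sum_const, Nat.card_Icc,
        add_tsub_cancel_right, nsmul_eq_mul]
      push_cast
      ring
    rw [hre, htot, Complex.ofReal_re]
    rw [hc, hd]
    have hπ : Real.pi ≠ 0 := Real.pi_ne_zero
    field_simp
    ring
  exact ⟨hmonic, hdeg, horth, heval1, hsup, hL2⟩
end

section
/- Let P be a polynomial with complex coefficients of degree n ≥ 1 all of whose roots lie in the open unit disc 𝔻 = {z : |z| < 1}, and let P*(z) = z^n·conj(P(1/conj(z))) be its n-th reciprocal (if P = Σ_{j=0}^n p_j z^j then P* = Σ_{j=0}^n conj(p_{n−j}) z^j). Then every root of the polynomial D(z) = P(z) + P*(z) lies on the unit circle {z : |z| = 1}. -/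
open Polynomial

noncomputable def starTransform (P : Polynomial ℂ) : Polynomial ℂ :=
  (P.map (starRingEnd ℂ)).reverse

lemma reverse_X_sub_C (a : ℂ) : ((X - C a) : ℂ[X]).reverse = 1 - C a * X := by
  have h1 : ((X - C a) : ℂ[X]).natDegree = 1 := natDegree_X_sub_C a
  unfold Polynomial.reverse
  rw [h1, sub_eq_add_neg, reflect_add, ← neg_one_mul, ← C_1, ← C_neg, reflect_C_mul,
    reflect_C, C_neg, C_1]
  have : reflect 1 (X : ℂ[X]) = 1 := by
    simpa using reflect_monomial 1 1 (R := ℂ)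
  rw [this]
  ring

lemma reverse_multiset_prod (s : Multiset ℂ[X]) :
    s.prod.reverse = (s.map Polynomial.reverse).prod := by
  induction s using Multiset.induction with
  | empty => simp [Polynomial.reverse]
  | cons a t ih => simp [reverse_mul_of_domain, ih]

lemma key_sq (z r : ℂ) :
    Complex.normSq (1 - (starRingEnd ℂ) r * z) - Complex.normSq (z - r)
      = (1 - Complex.normSq z) * (1 - Complex.normSq r) := by
  simp [Complex.normSq_apply, Complex.sub_re, Complex.sub_im, Complex.mul_re, Complex.mul_im,
    Complex.conj_re, Complex.conj_im]
  ring


lemma key_lt (z r : ℂ) (hr : ‖r‖ < 1) (hz : ‖z‖ < 1) :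
    ‖z - r‖ < ‖1 - (starRingEnd ℂ) r * z‖ := by
  have h := key_sq z r
  have h1 : Complex.normSq z < 1 := by
    rw [← Complex.sq_norm]; nlinarith [norm_nonneg z]
  have h2 : Complex.normSq r < 1 := by
    rw [← Complex.sq_norm]; nlinarith [norm_nonneg r]
  have hlt : Complex.normSq (z - r) < Complex.normSq (1 - (starRingEnd ℂ) r * z) := by nlinarith
  rw [← Complex.sq_norm, ← Complex.sq_norm] at hlt
  exact lt_of_pow_lt_pow_left₀ 2 (norm_nonneg _) hlt

lemma key_gt (z r : ℂ) (hr : ‖r‖ < 1) (hz : 1 < ‖z‖) :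
    ‖1 - (starRingEnd ℂ) r * z‖ < ‖z - r‖ := by
  have h := key_sq z r
  have h1 : 1 < Complex.normSq z := by
    rw [← Complex.sq_norm]; nlinarith
  have h2 : Complex.normSq r < 1 := by
    rw [← Complex.sq_norm]; nlinarith [norm_nonneg r]
  have hlt : Complex.normSq (1 - (starRingEnd ℂ) r * z) < Complex.normSq (z - r) := by nlinarith
  rw [← Complex.sq_norm, ← Complex.sq_norm] at hlt
  exact lt_of_pow_lt_pow_left₀ 2 (norm_nonneg _) hlt

lemma RHS_pos (z : ℂ) (hz : ‖z‖ < 1) (r : ℂ) (hr : ‖r‖ < 1) :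
    0 < ‖1 - (starRingEnd ℂ) r * z‖ := by
  have : (1 : ℂ) - (starRingEnd ℂ) r * z ≠ 0 := by
    intro h
    have h1 : (starRingEnd ℂ) r * z = 1 := by
      have := sub_eq_zero.1 h; linear_combination -this
    have := congrArg norm h1
    rw [norm_mul, norm_one, Complex.norm_conj] at this
    nlinarith [norm_nonneg r, norm_nonneg z]
  simpa [norm_pos_iff] using this

lemma prod_abs_le (z : ℂ) (hz : ‖z‖ < 1) (s : Multiset ℂ)
    (hmem : ∀ r ∈ s, ‖r‖ < 1) :
    (s.map (fun r => ‖z - r‖)).prod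
      ≤ (s.map (fun r => ‖1 - (starRingEnd ℂ) r * z‖)).prod := by
  induction s using Multiset.induction with
  | empty => simp
  | cons a t ih =>
    simp only [Multiset.map_cons, Multiset.prod_cons]
    have ha := key_lt z a (hmem a (Multiset.mem_cons_self a t)) hz
    refine mul_le_mul ha.le (ih fun r hr => hmem r (Multiset.mem_cons_of_mem hr)) ?_
      (norm_nonneg _)
    apply Multiset.prod_nonneg
    intro x hx
    obtain ⟨r, -, rfl⟩ := Multiset.mem_map.1 hx
    exact norm_nonneg _

lemma prod_abs_ge (z : ℂ) (hz : 1 < ‖z‖) (s : Multiset ℂ)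
    (hmem : ∀ r ∈ s, ‖r‖ < 1) :
    (s.map (fun r => ‖1 - (starRingEnd ℂ) r * z‖)).prod
      ≤ (s.map (fun r => ‖z - r‖)).prod := by
  induction s using Multiset.induction with
  | empty => simp
  | cons a t ih =>
    simp only [Multiset.map_cons, Multiset.prod_cons]
    have ha := key_gt z a (hmem a (Multiset.mem_cons_self a t)) hz
    refine mul_le_mul ha.le (ih fun r hr => hmem r (Multiset.mem_cons_of_mem hr)) ?_
      (norm_nonneg _)
    apply Multiset.prod_nonneg
    intro x hx
    obtain ⟨r, -, rfl⟩ := Multiset.mem_map.1 hx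
    exact norm_nonneg _

lemma prod_abs_lt (z : ℂ) (hz : ‖z‖ < 1) (s : Multiset ℂ) (hs : s ≠ 0)
    (hmem : ∀ r ∈ s, ‖r‖ < 1) :
    (s.map (fun r => ‖z - r‖)).prod
      < (s.map (fun r => ‖1 - (starRingEnd ℂ) r * z‖)).prod := by
  obtain ⟨a, ha⟩ := Multiset.exists_mem_of_ne_zero hs
  obtain ⟨t, rfl⟩ : ∃ t, s = a ::ₘ t := ⟨s.erase a, (Multiset.cons_erase ha).symm⟩
  simp only [Multiset.map_cons, Multiset.prod_cons]
  have hmemt : ∀ r ∈ t, ‖r‖ < 1 := fun r hr => hmem r (Multiset.mem_cons_of_mem hr)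
  have hA := key_lt z a (hmem a (Multiset.mem_cons_self a t)) hz
  have hT := prod_abs_le z hz t hmemt
  have hTpos : 0 < (t.map (fun r => ‖1 - (starRingEnd ℂ) r * z‖)).prod := by
    apply Multiset.prod_pos
    intro x hx
    obtain ⟨r, hr, rfl⟩ := Multiset.mem_map.1 hx
    exact RHS_pos z hz r (hmemt r hr)
  calc ‖z - a‖ * (t.map (fun r => ‖z - r‖)).prod
      = (t.map (fun r => ‖z - r‖)).prod * ‖z - a‖ := mul_comm _ _
    _ < (t.map (fun r => ‖1 - (starRingEnd ℂ) r * z‖)).prod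
        * ‖1 - (starRingEnd ℂ) a * z‖ := by
        apply mul_lt_mul' hT hA (norm_nonneg _) hTpos
    _ = _ := mul_comm _ _

lemma prod_abs_gt (z : ℂ) (hz : 1 < ‖z‖) (s : Multiset ℂ) (hs : s ≠ 0)
    (hmem : ∀ r ∈ s, ‖r‖ < 1) :
    (s.map (fun r => ‖1 - (starRingEnd ℂ) r * z‖)).prod
      < (s.map (fun r => ‖z - r‖)).prod := by
  obtain ⟨a, ha⟩ := Multiset.exists_mem_of_ne_zero hs
  obtain ⟨t, rfl⟩ : ∃ t, s = a ::ₘ t := ⟨s.erase a, (Multiset.cons_erase ha).symm⟩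
  simp only [Multiset.map_cons, Multiset.prod_cons]
  have hmemt : ∀ r ∈ t, ‖r‖ < 1 := fun r hr => hmem r (Multiset.mem_cons_of_mem hr)
  have hA := key_gt z a (hmem a (Multiset.mem_cons_self a t)) hz
  have hT := prod_abs_ge z hz t hmemt
  have hTpos : 0 < (t.map (fun r => ‖z - r‖)).prod := by
    apply Multiset.prod_pos
    intro x hx
    obtain ⟨r, hr, rfl⟩ := Multiset.mem_map.1 hx
    have : z ≠ r := by
      intro h; subst h; exact absurd (hmemt z hr) (by linarith)
    simpa [norm_pos_iff, sub_eq_zero] using this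
  calc ‖1 - (starRingEnd ℂ) a * z‖
        * (t.map (fun r => ‖1 - (starRingEnd ℂ) r * z‖)).prod
      = (t.map (fun r => ‖1 - (starRingEnd ℂ) r * z‖)).prod
        * ‖1 - (starRingEnd ℂ) a * z‖ := mul_comm _ _
    _ < (t.map (fun r => ‖z - r‖)).prod * ‖z - a‖ := by
        apply mul_lt_mul' hT hA (norm_nonneg _) hTpos
    _ = _ := mul_comm _ _

/-- if all roots of `P` (of degree `n ≥ 1`) lie in the open unit disc,
then every root of `D = P + P*` lies on the unit circle. -/
theorem roots_of_sum_with_reciprocal_on_circle (P : Polynomial ℂ) (n : ℕ) (hn : 1 ≤ n)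
    (hdeg : P.natDegree = n)
    (hroots : ∀ z : ℂ, P.eval z = 0 → ‖z‖ < 1) :
    ∀ z : ℂ, (P + starTransform P).eval z = 0 → ‖z‖ = 1 := by
  have hP0 : P ≠ 0 := fun h => by simp [h] at hdeg; omega
  have hsplit : P.Splits := IsAlgClosed.splits P
  have hfact := hsplit.eq_prod_roots
  set c := P.leadingCoeff with hc
  have hc0 : c ≠ 0 := leadingCoeff_ne_zero.2 hP0
  have hcard : P.roots.card = n := by rw [← hdeg]; exact splits_iff_card_roots.1 hsplit
  have hmem : ∀ r ∈ P.roots, ‖r‖ < 1 := fun r hr =>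
    hroots r ((mem_roots hP0).1 hr)
  -- factorization of starTransform
  have hstar : starTransform P = C ((starRingEnd ℂ) c) *
      (P.roots.map (fun r => 1 - C ((starRingEnd ℂ) r) * X)).prod := by
    unfold starTransform
    conv_lhs => rw [hfact]
    rw [Polynomial.map_mul, map_C, Polynomial.map_multiset_prod, Multiset.map_map]
    have : (P.roots.map (fun r => Polynomial.map (starRingEnd ℂ) (X - C r))) =
        P.roots.map (fun r => (X - C ((starRingEnd ℂ) r) : ℂ[X])) := by
      apply Multiset.map_congr rfl
      intro r _; simp
    rw [Function.comp_def, this, reverse_mul_of_domain, reverse_C, reverse_multiset_prod,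
      Multiset.map_map]
    congr 1
    congr 1
    apply Multiset.map_congr rfl
    intro r _
    exact reverse_X_sub_C _
  intro z hz0
  by_contra hne
  have habs : ‖P.eval z‖ = ‖(starTransform P).eval z‖ := by
    rw [eval_add] at hz0
    have : P.eval z = -(starTransform P).eval z := by linear_combination hz0
    rw [this, norm_neg]
  have evalP : ‖P.eval z‖
      = ‖c‖ * (P.roots.map (fun r => ‖z - r‖)).prod := by
    conv_lhs => rw [hfact]
    rw [eval_mul, eval_C, eval_multiset_prod, Multiset.map_map, norm_mul,
      ← normHom_apply (Multiset.prod _), map_multiset_prod, Multiset.map_map]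
    simp [Function.comp_def]
  have evalS : ‖(starTransform P).eval z‖
      = ‖c‖
        * (P.roots.map (fun r => ‖1 - (starRingEnd ℂ) r * z‖)).prod := by
    rw [hstar, eval_mul, eval_C, eval_multiset_prod, Multiset.map_map, norm_mul,
      ← normHom_apply (Multiset.prod _), map_multiset_prod, Multiset.map_map, Complex.norm_conj]
    simp [Function.comp_def]
  have hcpos : 0 < ‖c‖ := norm_pos_iff.mpr hc0
  have hsnz : P.roots ≠ 0 := by
    intro h
    rw [h] at hcard
    simp at hcard
    omega
  rcases lt_trichotomy (‖z‖) 1 with hlt | heq | hgt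
  · have := prod_abs_lt z hlt P.roots hsnz hmem
    have h2 : ‖P.eval z‖ < ‖(starTransform P).eval z‖ := by
      rw [evalP, evalS]
      exact mul_lt_mul_of_pos_left this hcpos
    rw [habs] at h2
    exact lt_irrefl _ h2
  · exact hne heq
  · have := prod_abs_gt z hgt P.roots hsnz hmem
    have h2 : ‖(starTransform P).eval z‖ < ‖P.eval z‖ := by
      rw [evalP, evalS]
      exact mul_lt_mul_of_pos_left this hcpos
    rw [habs] at h2
    exact lt_irrefl _ h2
end

section
/- For every a > 0 the following hold: (i) if γ ∈ [1/2, 1) then ∫₀ᵃ (cos x)/x^γ dx > 0; (ii) if γ ∈ (0,1) then ∫₀ᵃ (sin x)/x^γ dx > 0; (iii) if γ ∈ (0,1) then the improper integral ∫₀^∞ (sin x)/x^γ dx (understood as the limit of ∫₀ᵃ as a → ∞, which exists) is strictly positive. -/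
open MeasureTheory Real Filter Set intervalIntegral

namespace FresnelAux

/-- sin is periodic with period 2πk -/
lemma sin_shift (k : ℕ) (x : ℝ) : Real.sin x = Real.sin (x - 2 * π * k) := by
  have h := (Real.sin_periodic.nat_mul k).sub_eq x
  rw [← h]; ring_nf

lemma sin_nonneg_block (k : ℕ) {x : ℝ} (h1 : 2 * π * k ≤ x) (h2 : x ≤ 2 * π * k + π) :
    0 ≤ Real.sin x := by
  rw [sin_shift k x]
  exact Real.sin_nonneg_of_nonneg_of_le_pi (by linarith) (by linarith)

lemma sin_nonpos_block (k : ℕ) {x : ℝ} (h1 : 2 * π * k + π ≤ x) (h2 : x ≤ 2 * π * k + 2 * π) :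
    Real.sin x ≤ 0 := by
  have h := (Real.sin_periodic.nat_mul (k + 1)).sub_eq x
  have h' : Real.sin x = Real.sin (x - 2 * π * (k + 1)) := by
    rw [← h]; congr 1; push_cast; ring
  rw [h']
  exact Real.sin_nonpos_of_nonpos_of_neg_pi_le (by linarith) (by linarith)

section Abstract

variable {f : ℝ → ℝ}
  (hint : ∀ b : ℝ, IntegrableOn (fun x => Real.sin x * f x) (Set.Ioc 0 b))
  (hanti : ∀ x y : ℝ, 0 < x → x < y → f y < f x)
  (hpos : ∀ x : ℝ, 0 < x → 0 < f x)

include hint in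
lemma II : ∀ u v : ℝ, 0 ≤ u → 0 ≤ v →
    IntervalIntegrable (fun x => Real.sin x * f x) volume u v := by
  intro u v hu hv
  rw [intervalIntegrable_iff]
  exact (hint (max u v)).mono_set
    (by rw [Set.uIoc]; exact Set.Ioc_subset_Ioc_left (le_min hu hv))

include hanti in
lemma hle : ∀ x y : ℝ, 0 < x → x ≤ y → f y ≤ f x := by
  intro x y hx hxy
  rcases eq_or_lt_of_le hxy with h | h
  · rw [h]
  · exact (hanti x y hx h).le

include hpos in
lemma nonneg_integrand : ∀ x : ℝ, 0 ≤ x → 0 ≤ Real.sin x → 0 ≤ Real.sin x * f x := by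
  intro x hx hs
  rcases eq_or_lt_of_le hx with h | h
  · simp [← h]
  · exact mul_nonneg hs (hpos x h).le

include hpos in
lemma nonpos_integrand : ∀ x : ℝ, 0 ≤ x → Real.sin x ≤ 0 → Real.sin x * f x ≤ 0 := by
  intro x hx hs
  rcases eq_or_lt_of_le hx with h | h
  · simp [← h]
  · exact mul_nonpos_of_nonpos_of_nonneg hs (hpos x h).le

set_option maxHeartbeats 1000000 in
include hint hanti hpos in
/-- pairing: one full period starting at a multiple of 2π has nonnegative integral -/
lemma pair (k : ℕ) :
    0 ≤ ∫ x in (2 * π * k)..(2 * π * k + 2 * π), Real.sin x * f x := by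
  set c : ℝ := 2 * π * k with hc
  have hc0 : 0 ≤ c := by rw [hc]; positivity
  have hpi := Real.pi_pos
  have hsplit : (∫ x in c..(c + π), Real.sin x * f x)
      + ∫ x in (c + π)..(c + 2 * π), Real.sin x * f x
      = ∫ x in c..(c + 2 * π), Real.sin x * f x :=
    integral_add_adjacent_intervals (II hint _ _ hc0 (by linarith))
      (II hint _ _ (by linarith) (by linarith))
  have hshift : (∫ x in (c + π)..(c + 2 * π), Real.sin x * f x)
      = ∫ x in c..(c + π), Real.sin (x + π) * f (x + π) := by
    have h2 := intervalIntegral.integral_comp_add_right (a := c) (b := c + π)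
      (fun x => Real.sin x * f x) π
    rw [show c + 2 * π = c + π + π by ring]
    exact h2.symm
  have hII2 : IntervalIntegrable (fun x => Real.sin (x + π) * f (x + π)) volume c (c + π) := by
    have h3 := (II hint (c + π) (c + 2 * π) (by linarith) (by linarith)).comp_add_right π
    rwa [show c + π - π = c by ring, show c + 2 * π - π = c + π by ring] at h3
  have hcomb : (∫ x in c..(c + π), Real.sin x * f x)
      + ∫ x in c..(c + π), Real.sin (x + π) * f (x + π)
      = ∫ x in c..(c + π), (Real.sin x * f x + Real.sin (x + π) * f (x + π)) := by
    rw [intervalIntegral.integral_add (II hint _ _ hc0 (by linarith)) hII2]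
  have hnn : 0 ≤ ∫ x in c..(c + π), (Real.sin x * f x + Real.sin (x + π) * f (x + π)) := by
    apply intervalIntegral.integral_nonneg (by linarith)
    intro x hx
    rw [Real.sin_add_pi]
    have hsx : 0 ≤ Real.sin x := sin_nonneg_block k hx.1 hx.2
    rcases eq_or_lt_of_le (hc0.trans hx.1) with h | h
    · simp [← h]
    · have : f (x + π) ≤ f x := (hanti x (x + π) h (by linarith [Real.pi_pos])).le
      nlinarith [hpos x h, hpos (x + π) (by linarith [Real.pi_pos])]
  rw [← hcomb] at hnn
  rw [← hsplit, hshift]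
  linarith

include hint hanti hpos in
lemma chain : ∀ n k : ℕ, ∀ a : ℝ, 2 * π * k ≤ a → a ≤ 2 * π * k + 2 * π * n →
    0 ≤ ∫ x in (2 * π * k)..a, Real.sin x * f x := by
  intro n
  induction n with
  | zero =>
    intro k a h1 h2
    have : a = 2 * π * k := le_antisymm (by simpa using h2) h1
    simp [this]
  | succ n ih =>
    intro k a h1 h2
    have hc0 : (0:ℝ) ≤ 2 * π * k := by positivity
    by_cases hA : a ≤ 2 * π * k + 2 * π
    · by_cases hB : a ≤ 2 * π * k + π
      · apply intervalIntegral.integral_nonneg h1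
        intro x hx
        exact nonneg_integrand hpos x (hc0.trans hx.1)
          (sin_nonneg_block k hx.1 (hx.2.trans hB))
      · push_neg at hB
        have hsplit : (∫ x in (2 * π * k)..a, Real.sin x * f x)
            + ∫ x in a..(2 * π * k + 2 * π), Real.sin x * f x
            = ∫ x in (2 * π * k)..(2 * π * k + 2 * π), Real.sin x * f x :=
          integral_add_adjacent_intervals (II hint _ _ hc0 (hc0.trans h1))
            (II hint _ _ (hc0.trans h1) (by positivity))
        have h3 : (∫ x in a..(2 * π * k + 2 * π), Real.sin x * f x) ≤ 0 := by
          rw [← neg_nonneg, ← intervalIntegral.integral_neg]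
          apply intervalIntegral.integral_nonneg hA
          intro x hx
          simp only [neg_nonneg]
          exact nonpos_integrand hpos x (by linarith [hx.1, hB, Real.pi_pos, hc0])
            (sin_nonpos_block k (hB.le.trans hx.1) hx.2)
        linarith [pair hint hanti hpos k, hsplit]
    · push_neg at hA
      have hsplit : (∫ x in (2 * π * k)..(2 * π * k + 2 * π), Real.sin x * f x)
          + ∫ x in (2 * π * k + 2 * π)..a, Real.sin x * f x
          = ∫ x in (2 * π * k)..a, Real.sin x * f x :=
        integral_add_adjacent_intervals (II hint _ _ hc0 (by positivity))
          (II hint _ _ (by positivity) (hc0.trans h1))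
      have hk1 : (2 * π * ((k:ℝ) + 1)) = 2 * π * k + 2 * π := by ring
      have h4 : 0 ≤ ∫ x in (2 * π * ((k+1:ℕ):ℝ))..a, Real.sin x * f x := by
        apply ih (k+1) a
        · push_cast; linarith
        · push_cast; push_cast at h2; linarith
      rw [show ((2:ℝ) * π * ((k+1:ℕ):ℝ)) = 2 * π * k + 2 * π by push_cast; ring] at h4
      linarith [pair hint hanti hpos k]

include hint hanti hpos in
lemma chain_all (k : ℕ) (a : ℝ) (h1 : 2 * π * k ≤ a) :
    0 ≤ ∫ x in (2 * π * k)..a, Real.sin x * f x := by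
  obtain ⟨n, hn⟩ := exists_nat_ge ((a - 2 * π * k) / (2 * π))
  apply chain hint hanti hpos n k a h1
  have h2π : (0:ℝ) < 2 * π := by positivity
  rw [div_le_iff₀ h2π] at hn
  linarith

include hint hanti hpos in
lemma tail_bound (a : ℝ) (ha : π ≤ a) :
    -(2 * f π) ≤ ∫ x in π..a, Real.sin x * f x := by
  have hpi := Real.pi_pos
  have key : ∀ b : ℝ, π ≤ b → b ≤ 2 * π → -(2 * f π) ≤ ∫ x in π..b, Real.sin x * f x := by
    intro b hb1 hb2
    have hmono : (∫ x in π..b, f π * Real.sin x) ≤ ∫ x in π..b, Real.sin x * f x := by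
      apply intervalIntegral.integral_mono_on hb1
      · exact (continuous_const.mul Real.continuous_sin).intervalIntegrable _ _
      · exact II hint _ _ hpi.le (by linarith)
      · intro x hx
        have hs : Real.sin x ≤ 0 := by
          apply sin_nonpos_block 0
          · simp; linarith [hx.1]
          · simp; linarith [hx.2]
        have hf : f x ≤ f π := hle hanti π x hpi hx.1
        nlinarith
    have hcalc : (∫ x in π..b, f π * Real.sin x) = f π * (Real.cos π - Real.cos b) := by
      rw [intervalIntegral.integral_const_mul, integral_sin]
    rw [hcalc] at hmono
    have hcb : -1 ≤ Real.cos b := Real.neg_one_le_cos b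
    have hfπ : 0 < f π := hpos π hpi
    rw [Real.cos_pi] at hmono
    nlinarith [Real.cos_le_one b]
  by_cases hA : a ≤ 2 * π
  · exact key a ha hA
  · push_neg at hA
    have hsplit : (∫ x in π..(2 * π), Real.sin x * f x)
        + ∫ x in (2 * π)..a, Real.sin x * f x
        = ∫ x in π..a, Real.sin x * f x :=
      integral_add_adjacent_intervals (II hint _ _ hpi.le (by linarith))
        (II hint _ _ (by linarith) (by linarith))
    have h2 : 0 ≤ ∫ x in (2 * π)..a, Real.sin x * f x := by
      have := chain_all hint hanti hpos 1 a (by push_cast; linarith)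
      simpa using this
    linarith [key (2 * π) (by linarith) le_rfl]

include hint hanti hpos in
lemma head_bound : f (π / 2) + f π ≤ ∫ x in (0:ℝ)..π, Real.sin x * f x := by
  have hpi := Real.pi_pos
  have hsplit : (∫ x in (0:ℝ)..(π / 2), Real.sin x * f x)
      + ∫ x in (π / 2)..π, Real.sin x * f x
      = ∫ x in (0:ℝ)..π, Real.sin x * f x :=
    integral_add_adjacent_intervals (II hint _ _ le_rfl (by linarith))
      (II hint _ _ (by linarith) hpi.le)
  have h1 : (∫ x in (0:ℝ)..(π / 2), f (π / 2) * Real.sin x)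
      ≤ ∫ x in (0:ℝ)..(π / 2), Real.sin x * f x := by
    apply intervalIntegral.integral_mono_on (by linarith)
    · exact (continuous_const.mul Real.continuous_sin).intervalIntegrable _ _
    · exact II hint _ _ le_rfl (by linarith)
    · intro x hx
      have hs : 0 ≤ Real.sin x :=
        Real.sin_nonneg_of_nonneg_of_le_pi hx.1 (by linarith [hx.2])
      rcases eq_or_lt_of_le hx.1 with h | h
      · simp [← h]
      · have hf : f (π / 2) ≤ f x := hle hanti x (π / 2) h hx.2
        nlinarith
  have h2 : (∫ x in (π / 2)..π, f π * Real.sin x)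
      ≤ ∫ x in (π / 2)..π, Real.sin x * f x := by
    apply intervalIntegral.integral_mono_on (by linarith)
    · exact (continuous_const.mul Real.continuous_sin).intervalIntegrable _ _
    · exact II hint _ _ (by linarith) hpi.le
    · intro x hx
      have hs : 0 ≤ Real.sin x :=
        Real.sin_nonneg_of_nonneg_of_le_pi (by linarith [hx.1]) hx.2
      have hf : f π ≤ f x := hle hanti x π (by linarith [hx.1]) hx.2
      nlinarith
  have c1 : (∫ x in (0:ℝ)..(π / 2), f (π / 2) * Real.sin x) = f (π / 2) := by
    rw [intervalIntegral.integral_const_mul, integral_sin, Real.cos_zero, Real.cos_pi_div_two]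
    ring
  have c2 : (∫ x in (π / 2)..π, f π * Real.sin x) = f π := by
    rw [intervalIntegral.integral_const_mul, integral_sin, Real.cos_pi, Real.cos_pi_div_two]
    ring
  rw [c1] at h1; rw [c2] at h2
  linarith

include hint hanti hpos in
lemma lower_bound (a : ℝ) (ha : π ≤ a) :
    f (π / 2) - f π ≤ ∫ x in (0:ℝ)..a, Real.sin x * f x := by
  have hpi := Real.pi_pos
  have hsplit : (∫ x in (0:ℝ)..π, Real.sin x * f x)
      + ∫ x in π..a, Real.sin x * f x
      = ∫ x in (0:ℝ)..a, Real.sin x * f x :=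
    integral_add_adjacent_intervals (II hint _ _ le_rfl hpi.le)
      (II hint _ _ hpi.le (by linarith))
  have h1 := head_bound hint hanti hpos
  have h2 := tail_bound hint hanti hpos a ha
  linarith

include hint hanti hpos in
lemma main_pos (a : ℝ) (ha : 0 < a) :
    0 < ∫ x in (0:ℝ)..a, Real.sin x * f x := by
  have hpi := Real.pi_pos
  by_cases hA : a ≤ π
  · apply intervalIntegral_pos_of_pos_on (II hint _ _ le_rfl ha.le) _ ha
    intro x hx
    exact mul_pos (Real.sin_pos_of_pos_of_lt_pi hx.1 (lt_of_lt_of_le hx.2 hA))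
      (hpos x hx.1)
  · push_neg at hA
    have h1 := lower_bound hint hanti hpos a hA.le
    have h2 : f π < f (π / 2) := hanti (π / 2) π (by linarith) (by linarith)
    linarith

end Abstract

section Rpow

lemma int_rpow_Ioc {r : ℝ} (hr : -1 < r) (b : ℝ) :
    IntegrableOn (fun x : ℝ => x ^ r) (Set.Ioc 0 b) := by
  rcases le_or_gt b 0 with hb | hb
  · rw [Set.Ioc_eq_empty (not_lt.2 hb)]
    exact integrableOn_empty
  · exact (intervalIntegrable_iff_integrableOn_Ioc_of_le hb.le).1
      (intervalIntegral.intervalIntegrable_rpow' hr)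

lemma contOn_mul_rpow {g : ℝ → ℝ} (hg : Continuous g) (r : ℝ) {s : Set ℝ}
    (hs : ∀ x ∈ s, x ≠ 0) : ContinuousOn (fun x => g x * x ^ r) s :=
  hg.continuousOn.mul
    (fun x hx => (Real.continuousAt_rpow_const x r (Or.inl (hs x hx))).continuousWithinAt)

lemma int_trig_rpow {g : ℝ → ℝ} (hg : Continuous g) (hgb : ∀ x, |g x| ≤ 1) {r : ℝ}
    (hr : -1 < r) (b : ℝ) :
    IntegrableOn (fun x => g x * x ^ r) (Set.Ioc 0 b) := by
  apply Integrable.mono' (int_rpow_Ioc hr b)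
  · exact (contOn_mul_rpow hg r (fun x hx => ne_of_gt hx.1)).aestronglyMeasurable
      measurableSet_Ioc
  · rw [ae_restrict_iff' measurableSet_Ioc]
    filter_upwards with x hx
    have hx0 : 0 < x := hx.1
    rw [Real.norm_eq_abs, abs_mul, abs_of_pos (Real.rpow_pos_of_pos hx0 r)]
    exact mul_le_of_le_one_left (Real.rpow_pos_of_pos hx0 r).le (hgb x)

lemma int_sin_rpow' {γ : ℝ} (hγ0 : 0 < γ) (hγ1 : γ < 1) (b : ℝ) :
    IntegrableOn (fun x => Real.sin x * x ^ (-γ - 1)) (Set.Ioc 0 b) := by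
  apply Integrable.mono' (int_rpow_Ioc (r := -γ) (by linarith) b)
  · exact (contOn_mul_rpow Real.continuous_sin (-γ - 1) (fun x hx => ne_of_gt hx.1)).aestronglyMeasurable
      measurableSet_Ioc
  · rw [ae_restrict_iff' measurableSet_Ioc]
    filter_upwards with x hx
    have hx0 : 0 < x := hx.1
    rw [Real.norm_eq_abs, abs_mul, abs_of_pos (Real.rpow_pos_of_pos hx0 (-γ - 1))]
    calc |Real.sin x| * x ^ (-γ - 1) ≤ x * x ^ (-γ - 1) := by
          apply mul_le_mul_of_nonneg_right _ (Real.rpow_pos_of_pos hx0 _).le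
          calc |Real.sin x| ≤ |x| := Real.abs_sin_le_abs
            _ = x := abs_of_pos hx0
      _ = x ^ (-γ) := by
          have h := Real.rpow_add hx0 1 (-γ - 1)
          rw [Real.rpow_one] at h
          rw [← h]
          norm_num

lemma rpow_anti {r : ℝ} (hr : r < 0) : ∀ x y : ℝ, 0 < x → x < y → y ^ r < x ^ r :=
  fun x y hx hxy => Real.rpow_lt_rpow_of_neg hx hxy hr

lemma rpow_pos' (r : ℝ) : ∀ x : ℝ, 0 < x → (0:ℝ) < x ^ r :=
  fun x hx => Real.rpow_pos_of_pos hx r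

end Rpow

lemma II' {F : ℝ → ℝ} (h : ∀ b : ℝ, IntegrableOn F (Set.Ioc 0 b)) (u v : ℝ)
    (hu : 0 ≤ u) (hv : 0 ≤ v) : IntervalIntegrable F volume u v := by
  rw [intervalIntegrable_iff]
  exact (h (max u v)).mono_set
    (by rw [Set.uIoc]; exact Set.Ioc_subset_Ioc_left (le_min hu hv))

/-- primitive tends to zero at zero from the right -/
lemma tendsto_primitive_zero {F : ℝ → ℝ} (h : IntegrableOn F (Set.Ioc 0 1)) :
    Filter.Tendsto (fun ε => ∫ x in Set.Ioc 0 ε, F x) (nhdsWithin 0 (Set.Ioi 0)) (nhds 0) := by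
  have hIcc : IntegrableOn F (Set.Icc 0 1) := by
    rwa [integrableOn_Icc_iff_integrableOn_Ioc]
  have hcont := intervalIntegral.continuousOn_primitive (a := 0) (b := 1) (μ := volume) hIcc
  have h0 : ContinuousWithinAt (fun x => ∫ t in Set.Ioc 0 x, F t) (Set.Icc 0 1) 0 :=
    hcont 0 (Set.mem_Icc.2 ⟨le_rfl, zero_le_one⟩)
  have hval : (∫ t in Set.Ioc (0:ℝ) 0, F t) = 0 := by simp
  have htd : Filter.Tendsto (fun x => ∫ t in Set.Ioc 0 x, F t)
      (nhdsWithin 0 (Set.Icc 0 1)) (nhds 0) := by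
    have := h0.tendsto
    rwa [hval] at this
  apply htd.mono_left
  apply nhdsWithin_le_of_mem
  apply Filter.mem_of_superset (Ioo_mem_nhdsGT_of_mem (Set.mem_Ico.2 ⟨le_rfl, one_pos⟩))
  exact fun x hx => Set.mem_Icc.2 ⟨hx.1.le, hx.2.le⟩

section IBP

variable {γ : ℝ}

lemma ibp (hγ0 : 0 < γ) (hγ1 : γ < 1) {a : ℝ} (ha : 0 < a) :
    (∫ x in (0:ℝ)..a, Real.cos x * x ^ (-γ))
      = Real.sin a * a ^ (-γ) + γ * ∫ x in (0:ℝ)..a, Real.sin x * x ^ (-γ - 1) := by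
  have hneg : (-1:ℝ) < -γ := by linarith
  have hintC : ∀ b : ℝ, IntegrableOn (fun x => Real.cos x * x ^ (-γ)) (Set.Ioc 0 b) :=
    fun b => int_trig_rpow Real.continuous_cos (fun x => Real.abs_cos_le_one x) hneg b
  have hintS : ∀ b : ℝ, IntegrableOn (fun x => Real.sin x * x ^ (-γ - 1)) (Set.Ioc 0 b) :=
    fun b => int_sin_rpow' hγ0 hγ1 b
  set A := ∫ x in (0:ℝ)..a, Real.cos x * x ^ (-γ) with hA
  set S := ∫ x in (0:ℝ)..a, Real.sin x * x ^ (-γ - 1) with hS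
  -- the identity at level ε
  have key : ∀ ε : ℝ, ε ∈ Set.Ioo 0 a →
      (A - ∫ x in (0:ℝ)..ε, Real.cos x * x ^ (-γ))
        - γ * (S - ∫ x in (0:ℝ)..ε, Real.sin x * x ^ (-γ - 1))
      = Real.sin a * a ^ (-γ) - Real.sin ε * ε ^ (-γ) := by
    intro ε hε
    have hε0 : 0 < ε := hε.1
    have hεa : ε ≤ a := hε.2.le
    have hderiv : ∀ x ∈ Set.uIcc ε a, HasDerivAt (fun y => Real.sin y * y ^ (-γ))
        (Real.cos x * x ^ (-γ) + (-γ) * (Real.sin x * x ^ (-γ - 1))) x := by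
      intro x hx
      rw [Set.uIcc_of_le hεa] at hx
      have hx0 : 0 < x := lt_of_lt_of_le hε0 hx.1
      have h := (Real.hasDerivAt_sin x).mul
        (Real.hasDerivAt_rpow_const (p := -γ) (Or.inl hx0.ne'))
      have h2 : Real.cos x * x ^ (-γ) + Real.sin x * (-γ * x ^ (-γ - 1))
          = Real.cos x * x ^ (-γ) + (-γ) * (Real.sin x * x ^ (-γ - 1)) := by ring
      rwa [h2] at h
    have iC : IntervalIntegrable (fun x => Real.cos x * x ^ (-γ)) volume ε a :=
      II' hintC ε a hε0.le ha.le
    have iS : IntervalIntegrable (fun x => Real.sin x * x ^ (-γ - 1)) volume ε a :=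
      II' hintS ε a hε0.le ha.le
    have hFTC := intervalIntegral.integral_eq_sub_of_hasDerivAt hderiv
      (iC.add (iS.const_mul (-γ)))
    have hsplit : (∫ x in ε..a, (Real.cos x * x ^ (-γ) + (-γ) * (Real.sin x * x ^ (-γ - 1))))
        = (∫ x in ε..a, Real.cos x * x ^ (-γ))
          + (-γ) * ∫ x in ε..a, Real.sin x * x ^ (-γ - 1) := by
      rw [intervalIntegral.integral_add iC (iS.const_mul (-γ)),
        intervalIntegral.integral_const_mul]
    have hadd1 : (∫ x in (0:ℝ)..ε, Real.cos x * x ^ (-γ))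
        + (∫ x in ε..a, Real.cos x * x ^ (-γ)) = A :=
      integral_add_adjacent_intervals (II' hintC 0 ε le_rfl hε0.le) iC
    have hadd2 : (∫ x in (0:ℝ)..ε, Real.sin x * x ^ (-γ - 1))
        + (∫ x in ε..a, Real.sin x * x ^ (-γ - 1)) = S :=
      integral_add_adjacent_intervals (II' hintS 0 ε le_rfl hε0.le) iS
    rw [hsplit] at hFTC
    have e1 : (∫ x in ε..a, Real.cos x * x ^ (-γ))
        = A - ∫ x in (0:ℝ)..ε, Real.cos x * x ^ (-γ) := by linarith
    have e2 : (∫ x in ε..a, Real.sin x * x ^ (-γ - 1))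
        = S - ∫ x in (0:ℝ)..ε, Real.sin x * x ^ (-γ - 1) := by linarith
    rw [e1, e2] at hFTC
    linarith [hFTC]
  -- limits
  have hC : Filter.Tendsto (fun ε => ∫ x in (0:ℝ)..ε, Real.cos x * x ^ (-γ))
      (nhdsWithin 0 (Set.Ioi 0)) (nhds 0) := by
    apply (tendsto_primitive_zero (hintC 1)).congr'
    filter_upwards [self_mem_nhdsWithin] with ε (hε : ε ∈ Set.Ioi 0)
    rw [intervalIntegral.integral_of_le (le_of_lt hε)]
  have hD : Filter.Tendsto (fun ε => ∫ x in (0:ℝ)..ε, Real.sin x * x ^ (-γ - 1))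
      (nhdsWithin 0 (Set.Ioi 0)) (nhds 0) := by
    apply (tendsto_primitive_zero (hintS 1)).congr'
    filter_upwards [self_mem_nhdsWithin] with ε (hε : ε ∈ Set.Ioi 0)
    rw [intervalIntegral.integral_of_le (le_of_lt hε)]
  have hsinε : Filter.Tendsto (fun ε : ℝ => Real.sin ε * ε ^ (-γ))
      (nhdsWithin 0 (Set.Ioi 0)) (nhds 0) := by
    apply squeeze_zero_norm' (a := fun ε : ℝ => ε ^ (1 - γ))
    · filter_upwards [self_mem_nhdsWithin] with ε (hε : ε ∈ Set.Ioi 0)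
      have hε0 : (0:ℝ) < ε := hε
      rw [Real.norm_eq_abs, abs_mul, abs_of_pos (Real.rpow_pos_of_pos hε0 (-γ))]
      calc |Real.sin ε| * ε ^ (-γ) ≤ ε * ε ^ (-γ) := by
            apply mul_le_mul_of_nonneg_right _ (Real.rpow_pos_of_pos hε0 _).le
            calc |Real.sin ε| ≤ |ε| := Real.abs_sin_le_abs
              _ = ε := abs_of_pos hε0
        _ = ε ^ (1 - γ) := by
            have h := Real.rpow_add hε0 1 (-γ)
            rw [Real.rpow_one] at h
            rw [← h]
            ring_nf
    · have hc : ContinuousAt (fun x : ℝ => x ^ (1 - γ)) 0 :=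
        Real.continuousAt_rpow_const 0 (1 - γ) (Or.inr (by linarith))
      have := hc.tendsto
      rw [Real.zero_rpow (by linarith : (1:ℝ) - γ ≠ 0)] at this
      exact this.mono_left nhdsWithin_le_nhds
  have hLHS : Filter.Tendsto (fun ε => (A - ∫ x in (0:ℝ)..ε, Real.cos x * x ^ (-γ))
      - γ * (S - ∫ x in (0:ℝ)..ε, Real.sin x * x ^ (-γ - 1)))
      (nhdsWithin 0 (Set.Ioi 0)) (nhds ((A - 0) - γ * (S - 0))) :=
    (tendsto_const_nhds.sub hC).sub ((tendsto_const_nhds.sub hD).const_mul γ)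
  have hRHS : Filter.Tendsto (fun ε : ℝ => Real.sin a * a ^ (-γ) - Real.sin ε * ε ^ (-γ))
      (nhdsWithin 0 (Set.Ioi 0)) (nhds (Real.sin a * a ^ (-γ) - 0)) :=
    tendsto_const_nhds.sub hsinε
  have heq : A - γ * S = Real.sin a * a ^ (-γ) - 0 := by
    have h1 : Filter.Tendsto (fun ε => (A - ∫ x in (0:ℝ)..ε, Real.cos x * x ^ (-γ))
        - γ * (S - ∫ x in (0:ℝ)..ε, Real.sin x * x ^ (-γ - 1)))
        (nhdsWithin 0 (Set.Ioi 0)) (nhds (Real.sin a * a ^ (-γ) - 0)) := by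
      apply hRHS.congr'
      filter_upwards [Ioo_mem_nhdsGT_of_mem (Set.mem_Ico.2 ⟨le_rfl, ha⟩)] with ε hε
      exact (key ε hε).symm
    have := tendsto_nhds_unique hLHS h1
    simpa using this
  rw [sub_zero] at heq
  linarith

end IBP

lemma sqrt2_bound : (1.41:ℝ) ≤ (2:ℝ) ^ ((1:ℝ)/2) := by
  have h0 : (0:ℝ) ≤ (2:ℝ) ^ ((1:ℝ)/2) := (Real.rpow_pos_of_pos two_pos _).le
  have hsq : ((2:ℝ) ^ ((1:ℝ)/2)) ^ (2:ℕ) = 2 := by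
    rw [← Real.rpow_natCast ((2:ℝ) ^ ((1:ℝ)/2)) 2, ← Real.rpow_mul (by norm_num : (0:ℝ) ≤ 2)]
    norm_num
  nlinarith [hsq]

lemma arith_key {γ : ℝ} (h1 : 1/2 ≤ γ) (h2 : γ < 1) :
    π ^ (-γ) ≤ γ * ((2/π) * ((π/2) ^ (1-γ)) / (1-γ) - π ^ (-γ-1)) := by
  have hπ := Real.pi_pos
  have hγ0 : 0 < γ := by linarith
  have hp : 0 < π ^ γ := Real.rpow_pos_of_pos hπ γ
  have ht2 : (0:ℝ) < 2 ^ γ := Real.rpow_pos_of_pos two_pos γ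
  have e1 : π ^ (-γ) = (π ^ γ)⁻¹ := Real.rpow_neg hπ.le γ
  have e2 : π ^ (-γ-1) = (π ^ γ)⁻¹ * π⁻¹ := by
    rw [show (-γ-1 : ℝ) = -γ + (-1) by ring, Real.rpow_add hπ, e1,
      Real.rpow_neg_one]
  have e3 : (π/2 : ℝ) ^ (1-γ) = (π / π ^ γ) / (2 / 2 ^ γ) := by
    rw [Real.div_rpow hπ.le (by norm_num : (0:ℝ) ≤ 2),
      Real.rpow_sub hπ, Real.rpow_sub two_pos, Real.rpow_one, Real.rpow_one]
  have ht : (1.41:ℝ) ≤ 2 ^ γ := by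
    calc (1.41:ℝ) ≤ (2:ℝ) ^ ((1:ℝ)/2) := sqrt2_bound
      _ ≤ 2 ^ γ := Real.rpow_le_rpow_of_exponent_le one_le_two (by linarith)
  have hπu : π < 3.15 := by linarith [Real.pi_lt_d2]
  have hπl : (3.14:ℝ) < π := by linarith [Real.pi_gt_d6]
  have h1γ : (0:ℝ) < 1 - γ := by linarith
  have hTeq : γ * ((2/π) * ((π/2) ^ (1-γ)) / (1-γ) - π ^ (-γ-1)) - π ^ (-γ)
      = (γ * (2 ^ γ) * π - (π + γ) * (1-γ)) / (π * (1-γ) * (π ^ γ)) := by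
    rw [e1, e2, e3]
    field_simp
    ring
  have hnum : 0 ≤ γ * (2 ^ γ) * π - (π + γ) * (1-γ) := by
    nlinarith [mul_le_mul_of_nonneg_right ht (mul_pos hγ0 hπ).le,
      mul_pos hγ0 hπ, sq_nonneg (γ - 1/2), mul_nonneg (by linarith : (0:ℝ) ≤ γ - 1/2) h1γ.le,
      mul_nonneg (mul_nonneg (by linarith : (0:ℝ) ≤ γ - 1/2) h1γ.le) hπ.le]
  have hden : 0 < π * (1-γ) * (π ^ γ) := by positivity
  have := div_nonneg hnum hden.le
  linarith [hTeq ▸ this]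


section Main

variable {γ : ℝ}

/-- lower bound for `∫₀ᵃ sin x · x^(-γ-1)` when `a ≥ π`. -/
lemma S_lower (hγ0 : 0 < γ) (hγ1 : γ < 1) {a : ℝ} (ha : π ≤ a) :
    (2/π) * ((π/2) ^ (1-γ)) / (1-γ) - π ^ (-γ-1)
      ≤ ∫ x in (0:ℝ)..a, Real.sin x * x ^ (-γ - 1) := by
  have hπ := Real.pi_pos
  have hintS : ∀ b : ℝ, IntegrableOn (fun x => Real.sin x * x ^ (-γ - 1)) (Set.Ioc 0 b) :=
    int_sin_rpow' hγ0 hγ1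
  have hsplit1 : (∫ x in (0:ℝ)..(π/2), Real.sin x * x ^ (-γ - 1))
      + ∫ x in (π/2)..π, Real.sin x * x ^ (-γ - 1)
      = ∫ x in (0:ℝ)..π, Real.sin x * x ^ (-γ - 1) :=
    integral_add_adjacent_intervals (II' hintS _ _ le_rfl (by linarith))
      (II' hintS _ _ (by linarith) hπ.le)
  have hsplit2 : (∫ x in (0:ℝ)..π, Real.sin x * x ^ (-γ - 1))
      + ∫ x in π..a, Real.sin x * x ^ (-γ - 1)
      = ∫ x in (0:ℝ)..a, Real.sin x * x ^ (-γ - 1) :=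
    integral_add_adjacent_intervals (II' hintS _ _ le_rfl hπ.le)
      (II' hintS _ _ hπ.le (by linarith))
  -- piece 1 : Jordan bound
  have p1 : (2/π) * ((π/2) ^ (1-γ)) / (1-γ)
      ≤ ∫ x in (0:ℝ)..(π/2), Real.sin x * x ^ (-γ - 1) := by
    have hmono : (∫ x in (0:ℝ)..(π/2), 2/π * x ^ (-γ))
        ≤ ∫ x in (0:ℝ)..(π/2), Real.sin x * x ^ (-γ - 1) := by
      apply intervalIntegral.integral_mono_on (by linarith)
      · exact (intervalIntegral.intervalIntegrable_rpow' (by linarith : (-1:ℝ) < -γ)).const_mul _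
      · exact II' hintS _ _ le_rfl (by linarith)
      · intro x hx
        rcases eq_or_lt_of_le hx.1 with h | h
        · rw [← h, Real.zero_rpow (by linarith : -γ ≠ 0)]
          simp
        · have hJ : 2/π * x ≤ Real.sin x := Real.mul_le_sin h.le hx.2
          have hx1 : x * x ^ (-γ - 1) = x ^ (-γ) := by
            have h2 := Real.rpow_add h 1 (-γ - 1)
            rw [Real.rpow_one] at h2
            rw [← h2]
            norm_num
          have hr : (0:ℝ) < x ^ (-γ - 1) := Real.rpow_pos_of_pos h _
          calc 2/π * x ^ (-γ) = 2/π * (x * x ^ (-γ - 1)) := by rw [hx1]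
            _ = (2/π * x) * x ^ (-γ - 1) := by ring
            _ ≤ Real.sin x * x ^ (-γ - 1) := mul_le_mul_of_nonneg_right hJ hr.le
    have hcalc : (∫ x in (0:ℝ)..(π/2), 2/π * x ^ (-γ))
        = (2/π) * ((π/2) ^ (1-γ)) / (1-γ) := by
      rw [intervalIntegral.integral_const_mul,
        integral_rpow (Or.inl (by linarith : (-1:ℝ) < -γ)),
        Real.zero_rpow (by linarith : -γ + 1 ≠ 0)]
      rw [show -γ + 1 = 1 - γ by ring]
      field_simp
      simp
    rw [← hcalc]
    exact hmono
  -- piece 2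
  have p2 : π ^ (-γ-1) ≤ ∫ x in (π/2)..π, Real.sin x * x ^ (-γ - 1) := by
    have hmono : (∫ x in (π/2)..π, π ^ (-γ-1) * Real.sin x)
        ≤ ∫ x in (π/2)..π, Real.sin x * x ^ (-γ - 1) := by
      apply intervalIntegral.integral_mono_on (by linarith)
      · exact (continuous_const.mul Real.continuous_sin).intervalIntegrable _ _
      · exact II' hintS _ _ (by linarith) hπ.le
      · intro x hx
        have hx0 : 0 < x := by linarith [hx.1]
        have hs : 0 ≤ Real.sin x :=
          Real.sin_nonneg_of_nonneg_of_le_pi (by linarith [hx.1]) hx.2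
        have hf : π ^ (-γ-1) ≤ x ^ (-γ-1) := by
          rcases eq_or_lt_of_le hx.2 with h | h
          · rw [h]
          · exact (Real.rpow_lt_rpow_of_neg hx0 h (by linarith : -γ-1 < 0)).le
        calc π ^ (-γ-1) * Real.sin x ≤ x ^ (-γ-1) * Real.sin x :=
              mul_le_mul_of_nonneg_right hf hs
          _ = Real.sin x * x ^ (-γ - 1) := by ring
    have hcalc : (∫ x in (π/2)..π, π ^ (-γ-1) * Real.sin x) = π ^ (-γ-1) := by
      rw [intervalIntegral.integral_const_mul, integral_sin, Real.cos_pi, Real.cos_pi_div_two]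
      ring
    rw [← hcalc]
    exact hmono
  -- piece 3 : tail bound with f = x ^ (-γ-1)
  have p3 : -(2 * π ^ (-γ-1)) ≤ ∫ x in π..a, Real.sin x * x ^ (-γ - 1) := by
    have := tail_bound (f := fun x => x ^ (-γ-1)) hintS
      (rpow_anti (by linarith : -γ-1 < 0)) (rpow_pos' _) a ha
    simpa using this
  linarith

/-- positivity of the cosine integral for `γ ∈ [1/2, 1)` -/
lemma cos_pos (hγl : 1/2 ≤ γ) (hγ1 : γ < 1) {a : ℝ} (ha : 0 < a) :
    0 < ∫ x in (0:ℝ)..a, Real.cos x * x ^ (-γ) := by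
  have hγ0 : 0 < γ := by linarith
  have hπ := Real.pi_pos
  have hintS : ∀ b : ℝ, IntegrableOn (fun x => Real.sin x * x ^ (-γ - 1)) (Set.Ioc 0 b) :=
    int_sin_rpow' hγ0 hγ1
  have hanti2 : ∀ x y : ℝ, 0 < x → x < y → (y:ℝ) ^ (-γ-1) < x ^ (-γ-1) :=
    rpow_anti (by linarith : -γ-1 < 0)
  rw [ibp hγ0 hγ1 ha]
  rcases le_or_gt 0 (Real.sin a) with hs | hs
  · have hS : 0 < ∫ x in (0:ℝ)..a, Real.sin x * x ^ (-γ - 1) := by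
      have := main_pos (f := fun x => x ^ (-γ-1)) hintS hanti2 (rpow_pos' _) a ha
      simpa using this
    have h1 : 0 ≤ Real.sin a * a ^ (-γ) :=
      mul_nonneg hs (Real.rpow_pos_of_pos ha _).le
    nlinarith
  · have hπa : π < a := by
      by_contra h
      push_neg at h
      exact absurd (Real.sin_nonneg_of_nonneg_of_le_pi ha.le h) (not_le.2 hs)
    have hS := S_lower hγ0 hγ1 hπa.le
    have hkey := arith_key hγl hγ1
    have h5 : a ^ (-γ) < π ^ (-γ) :=
      Real.rpow_lt_rpow_of_neg hπ hπa (by linarith : -γ < 0)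
    have h6 : -(a ^ (-γ)) ≤ Real.sin a * a ^ (-γ) := by
      have := Real.neg_one_le_sin a
      nlinarith [Real.rpow_pos_of_pos ha (-γ)]
    nlinarith

end Main

section Improper

variable {γ : ℝ}

lemma cos_tail_integrable (hγ0 : 0 < γ) :
    IntegrableOn (fun x => Real.cos x * x ^ (-γ-1)) (Set.Ioi π) := by
  have hπ := Real.pi_pos
  apply Integrable.mono' (integrableOn_Ioi_rpow_of_lt (by linarith : -γ-1 < -1) hπ)
  · exact (contOn_mul_rpow Real.continuous_cos (-γ-1)
      (fun x hx => ne_of_gt (hπ.trans hx))).aestronglyMeasurable measurableSet_Ioi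
  · rw [ae_restrict_iff' measurableSet_Ioi]
    filter_upwards with x hx
    have hx0 : 0 < x := hπ.trans hx
    rw [Real.norm_eq_abs, abs_mul, abs_of_pos (Real.rpow_pos_of_pos hx0 _)]
    exact mul_le_of_le_one_left (Real.rpow_pos_of_pos hx0 _).le (Real.abs_cos_le_one x)

lemma sin_repr (hγ0 : 0 < γ) (hγ1 : γ < 1) {b : ℝ} (hb : π ≤ b) :
    (∫ x in Set.Ioc (0:ℝ) b, Real.sin x * x ^ (-γ))
      = (∫ x in Set.Ioc (0:ℝ) π, Real.sin x * x ^ (-γ)) + (-Real.cos b * b ^ (-γ))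
        - π ^ (-γ) - γ * ∫ x in π..b, Real.cos x * x ^ (-γ-1) := by
  have hπ := Real.pi_pos
  have hintS : ∀ c : ℝ, IntegrableOn (fun x => Real.sin x * x ^ (-γ)) (Set.Ioc 0 c) :=
    int_trig_rpow Real.continuous_sin (fun x => Real.abs_sin_le_one x)
      (by linarith : (-1:ℝ) < -γ)
  have iS : IntervalIntegrable (fun x => Real.sin x * x ^ (-γ)) volume π b :=
    II' hintS π b hπ.le (by linarith)
  have iC : IntervalIntegrable (fun x => Real.cos x * x ^ (-γ-1)) volume π b := by
    apply ContinuousOn.intervalIntegrable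
    apply contOn_mul_rpow Real.continuous_cos
    intro x hx
    rw [Set.uIcc_of_le hb] at hx
    exact ne_of_gt (lt_of_lt_of_le hπ hx.1)
  have hderiv : ∀ x ∈ Set.uIcc π b, HasDerivAt (fun y => -Real.cos y * y ^ (-γ))
      (Real.sin x * x ^ (-γ) + γ * (Real.cos x * x ^ (-γ-1))) x := by
    intro x hx
    rw [Set.uIcc_of_le hb] at hx
    have hx0 : 0 < x := lt_of_lt_of_le hπ hx.1
    have h := ((Real.hasDerivAt_cos x).neg.mul
      (Real.hasDerivAt_rpow_const (p := -γ) (Or.inl hx0.ne')))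
    have h2 : - -Real.sin x * x ^ (-γ) + -Real.cos x * (-γ * x ^ (-γ - 1))
        = Real.sin x * x ^ (-γ) + γ * (Real.cos x * x ^ (-γ-1)) := by ring
    rw [← h2]
    exact h
  have hFTC := intervalIntegral.integral_eq_sub_of_hasDerivAt hderiv
    (iS.add (iC.const_mul γ))
  rw [intervalIntegral.integral_add iS (iC.const_mul γ),
    intervalIntegral.integral_const_mul] at hFTC
  have hGπ : -Real.cos π * π ^ (-γ) = π ^ (-γ) := by rw [Real.cos_pi]; ring
  rw [hGπ] at hFTC
  have hsplit : (∫ x in (0:ℝ)..π, Real.sin x * x ^ (-γ))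
      + ∫ x in π..b, Real.sin x * x ^ (-γ)
      = ∫ x in (0:ℝ)..b, Real.sin x * x ^ (-γ) :=
    integral_add_adjacent_intervals (II' hintS 0 π le_rfl hπ.le) iS
  rw [← intervalIntegral.integral_of_le (by linarith : (0:ℝ) ≤ b),
    ← intervalIntegral.integral_of_le hπ.le, ← hsplit]
  linarith

lemma improper_sin (hγ0 : 0 < γ) (hγ1 : γ < 1) :
    ∃ L : ℝ, 0 < L ∧ Filter.Tendsto (fun b : ℝ => ∫ x in Set.Ioc (0:ℝ) b, Real.sin x * x ^ (-γ))
      Filter.atTop (nhds L) := by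
  have hπ := Real.pi_pos
  have hintS : ∀ c : ℝ, IntegrableOn (fun x => Real.sin x * x ^ (-γ)) (Set.Ioc 0 c) :=
    int_trig_rpow Real.continuous_sin (fun x => Real.abs_sin_le_one x)
      (by linarith : (-1:ℝ) < -γ)
  set K := ∫ x in Set.Ioc (0:ℝ) π, Real.sin x * x ^ (-γ) with hK
  set I := ∫ x in Set.Ioi π, Real.cos x * x ^ (-γ-1) with hI
  set L := K + 0 - π ^ (-γ) - γ * I with hL
  have hconv : Filter.Tendsto (fun b : ℝ => ∫ x in Set.Ioc (0:ℝ) b, Real.sin x * x ^ (-γ))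
      Filter.atTop (nhds L) := by
    have t1 : Filter.Tendsto (fun b : ℝ => -Real.cos b * b ^ (-γ)) Filter.atTop (nhds 0) := by
      apply squeeze_zero_norm' (a := fun b : ℝ => b ^ (-γ))
      · filter_upwards [Filter.eventually_ge_atTop 1] with b hb
        have hb0 : (0:ℝ) < b := by linarith
        rw [Real.norm_eq_abs, abs_mul, abs_neg, abs_of_pos (Real.rpow_pos_of_pos hb0 _)]
        exact mul_le_of_le_one_left (Real.rpow_pos_of_pos hb0 _).le (Real.abs_cos_le_one b)
      · exact tendsto_rpow_neg_atTop hγ0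
    have t2 : Filter.Tendsto (fun b : ℝ => ∫ x in π..b, Real.cos x * x ^ (-γ-1))
        Filter.atTop (nhds I) :=
      MeasureTheory.intervalIntegral_tendsto_integral_Ioi π (cos_tail_integrable hγ0) tendsto_id
    have hT : Filter.Tendsto (fun b : ℝ => K + (-Real.cos b * b ^ (-γ)) - π ^ (-γ)
        - γ * ∫ x in π..b, Real.cos x * x ^ (-γ-1)) Filter.atTop (nhds L) :=
      ((tendsto_const_nhds.add t1).sub tendsto_const_nhds).sub (t2.const_mul γ)
    apply hT.congr'
    filter_upwards [Filter.eventually_ge_atTop π] with b hb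
    rw [sin_repr hγ0 hγ1 hb]
  refine ⟨L, ?_, hconv⟩
  have hlow : (π/2) ^ (-γ) - π ^ (-γ) ≤ L := by
    apply ge_of_tendsto hconv
    filter_upwards [Filter.eventually_ge_atTop π] with b hb
    have := lower_bound (f := fun x => x ^ (-γ)) hintS
      (rpow_anti (by linarith : -γ < 0)) (rpow_pos' _) b hb
    rw [intervalIntegral.integral_of_le (by linarith : (0:ℝ) ≤ b)] at this
    simpa using this
  have : π ^ (-γ) < (π/2) ^ (-γ) :=
    Real.rpow_lt_rpow_of_neg (by linarith) (by linarith) (by linarith : -γ < 0)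
  linarith

end Improper

lemma conv_div (g : ℝ → ℝ) (γ b : ℝ) :
    (∫ x in Set.Ioc (0:ℝ) b, g x / x ^ γ) = ∫ x in Set.Ioc (0:ℝ) b, g x * x ^ (-γ) := by
  apply MeasureTheory.setIntegral_congr_fun measurableSet_Ioc
  intro x hx
  simp only []
  rw [Real.rpow_neg hx.1.le, div_eq_mul_inv]

end FresnelAux

/-- positivity of the incomplete Fresnel-type integrals
`∫₀ᵃ cos x / x^γ dx` (for `γ ∈ [1/2,1)`) and `∫₀ᵃ sin x / x^γ dx` (for `γ ∈ (0,1)`),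
and of the convergent improper integral `∫₀^∞ sin x / x^γ dx`. -/
theorem fresnel_positivity (a : ℝ) (ha : 0 < a) :
    (∀ γ : ℝ, γ ∈ Set.Ico (1 / 2 : ℝ) 1 →
      0 < ∫ x in Set.Ioc (0 : ℝ) a, Real.cos x / x ^ γ) ∧
    (∀ γ : ℝ, γ ∈ Set.Ioo (0 : ℝ) 1 →
      0 < ∫ x in Set.Ioc (0 : ℝ) a, Real.sin x / x ^ γ) ∧
    (∀ γ : ℝ, γ ∈ Set.Ioo (0 : ℝ) 1 → ∃ L : ℝ, 0 < L ∧
      Filter.Tendsto (fun b : ℝ => ∫ x in Set.Ioc (0 : ℝ) b, Real.sin x / x ^ γ)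
        Filter.atTop (nhds L)) := by
  refine ⟨?_, ?_, ?_⟩
  · intro γ hγ
    rw [FresnelAux.conv_div, ← intervalIntegral.integral_of_le ha.le]
    exact FresnelAux.cos_pos hγ.1 hγ.2 ha
  · intro γ hγ
    rw [FresnelAux.conv_div, ← intervalIntegral.integral_of_le ha.le]
    have hintS : ∀ c : ℝ, IntegrableOn (fun x => Real.sin x * x ^ (-γ)) (Set.Ioc 0 c) :=
      FresnelAux.int_trig_rpow Real.continuous_sin (fun x => Real.abs_sin_le_one x)
        (by linarith [hγ.1, hγ.2] : (-1:ℝ) < -γ)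
    have := FresnelAux.main_pos (f := fun x => x ^ (-γ)) hintS
      (FresnelAux.rpow_anti (by linarith [hγ.1] : -γ < 0)) (FresnelAux.rpow_pos' _) a ha
    simpa using this
  · intro γ hγ
    obtain ⟨L, hL, hT⟩ := FresnelAux.improper_sin hγ.1 hγ.2
    exact ⟨L, hL, hT.congr (fun b => (FresnelAux.conv_div _ _ _).symm)⟩
end

section
/- Fix β ∈ (0,1) and let d_j = β(β+1)⋯(β+j−1)/j! for j ≥ 1. Then there exists a constant C (depending only on β) such that for every n ≥ 1 and every θ with 0 < |θ| ≤ π: (i) |Σ_{j=1}^{n} j·d_j·e^{ijθ}| ≤ C·n^β/|θ| when |θ| > n^{−1}, and |Σ_{j=1}^{n} j·d_j·e^{ijθ}| ≤ C·n^{1+β} when |θ| ≤ n^{−1}; (ii) |Σ_{j=1}^{n} j²·d_j·e^{ijθ}| ≤ C·n^{β+1}/|θ| when |θ| > n^{−1}, and |Σ_{j=1}^{n} j²·d_j·e^{ijθ}| ≤ C·n^{2+β} when |θ| ≤ n^{−1}. (These are bounds on the first and second θ-derivatives of B_n(e^{iθ}) = 1 + Σ_{j=1}^n d_j e^{ijθ}.)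 -/
open Finset

/-- Taylor coefficients of `(1−z)^{−β}`: `d_j = β(β+1)⋯(β+j−1)/j!`. -/
noncomputable def dcoef (β : ℝ) (j : ℕ) : ℝ :=
  (∏ i ∈ Finset.range j, (β + i)) / (Nat.factorial j)

namespace BnAux

lemma dcoef_succ (β : ℝ) (j : ℕ) :
    dcoef β (j + 1) = dcoef β j * (β + j) / (j + 1) := by
  unfold dcoef
  rw [Finset.prod_range_succ, Nat.factorial_succ]
  push_cast
  rw [div_mul_eq_mul_div, div_div, mul_comm ((j:ℝ)+1)]

lemma dcoef_pos {β : ℝ} (hβ : 0 < β) (j : ℕ) : 0 < dcoef β j := by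
  apply div_pos
  · exact Finset.prod_pos fun i _ => by positivity
  · exact_mod_cast Nat.factorial_pos j

/-- `(j+1) d_{j+1} = j d_j + β d_j`. -/
lemma key_rec (β : ℝ) (j : ℕ) :
    ((j : ℝ) + 1) * dcoef β (j + 1) = (j : ℝ) * dcoef β j + β * dcoef β j := by
  rw [dcoef_succ]
  have h2 : (j : ℝ) + 1 ≠ 0 := by positivity
  field_simp
  ring

/-- Harmonic sum bound: `∑_{k=1}^m 1/k ≤ 1 + log m` for `m ≥ 1`. -/
lemma harmonic_le (m : ℕ) (hm : 1 ≤ m) :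
    ∑ k ∈ Finset.Icc 1 m, (1 : ℝ) / k ≤ 1 + Real.log m := by
  induction m with
  | zero => omega
  | succ n ih =>
    rcases Nat.lt_or_ge 1 (n + 1) with h | h
    · have hn : 1 ≤ n := by omega
      have hnpos : (0 : ℝ) < n := by exact_mod_cast hn
      have hx : (0 : ℝ) < (n : ℝ) / (n + 1) := by positivity
      have h1 : Real.log ((n : ℝ) / (n + 1)) ≤ (n : ℝ) / (n + 1) - 1 :=
        Real.log_le_sub_one_of_pos hx
      have h2 : Real.log ((n : ℝ) / (n + 1)) = Real.log n - Real.log ((n : ℝ) + 1) :=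
        Real.log_div (by positivity) (by positivity)
      have h3 : (n : ℝ) / (n + 1) - 1 = -(1 / (n + 1)) := by field_simp; ring
      have hstep : (1 : ℝ) / (n + 1) ≤ Real.log ((n : ℝ) + 1) - Real.log n := by
        rw [h2, h3] at h1; linarith
      rw [Finset.sum_Icc_succ_top (by omega : 1 ≤ n + 1)]
      push_cast
      have := ih hn
      linarith
    · have hn0 : n = 0 := by omega
      subst hn0
      simp

/-- `n d_n ≤ β exp(β ∑_{k=1}^{n-1} 1/k)`. -/
lemma nd_le (β : ℝ) (hβ : 0 < β) (n : ℕ) (hn : 1 ≤ n) :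
    (n : ℝ) * dcoef β n ≤ β * Real.exp (β * ∑ k ∈ Finset.Icc 1 (n - 1), (1 : ℝ) / k) := by
  induction n with
  | zero => omega
  | succ m ih =>
    rcases Nat.lt_or_ge 1 (m + 1) with h | h
    · have hm : 1 ≤ m := by omega
      have hmpos : (0 : ℝ) < m := by exact_mod_cast hm
      have hrec := key_rec β m
      have hdm : 0 < dcoef β m := dcoef_pos hβ m
      have hprev := ih hm
      have heq : ((m : ℝ) + 1) * dcoef β (m + 1) = (m : ℝ) * dcoef β m * (1 + β / m) := by
        rw [hrec]; field_simp
      have hfac : (1 : ℝ) + β / m ≤ Real.exp (β / m) := by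
        have := Real.add_one_le_exp (β / (m : ℝ)); linarith
      have hpos1 : (0 : ℝ) < 1 + β / m := by positivity
      calc ((m + 1 : ℕ) : ℝ) * dcoef β (m + 1)
          = (m : ℝ) * dcoef β m * (1 + β / m) := by push_cast; rw [heq]
        _ ≤ β * Real.exp (β * ∑ k ∈ Finset.Icc 1 (m - 1), (1 : ℝ) / k) * Real.exp (β / m) := by
            apply mul_le_mul hprev hfac hpos1.le (by positivity)
        _ = β * Real.exp (β * (∑ k ∈ Finset.Icc 1 (m - 1), (1 : ℝ) / k + 1 / m)) := by
            rw [mul_add, Real.exp_add, mul_assoc]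
            congr 2
            rw [mul_one_div]
        _ = β * Real.exp (β * ∑ k ∈ Finset.Icc 1 (m + 1 - 1), (1 : ℝ) / k) := by
            congr 2
            have h4 : m + 1 - 1 = (m - 1) + 1 := by omega
            rw [h4, Finset.sum_Icc_succ_top (by omega : 1 ≤ (m - 1) + 1)]
            rw [show m - 1 + 1 = m from by omega]
    · have hm0 : m = 0 := by omega
      subst hm0
      simp [dcoef]

/-- Main coefficient bound: `n d_n ≤ β e^β n^β` for `n ≥ 1`. -/
lemma nd_le_rpow (β : ℝ) (hβ0 : 0 < β) (n : ℕ) (hn : 1 ≤ n) :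
    (n : ℝ) * dcoef β n ≤ β * Real.exp β * (n : ℝ) ^ β := by
  have hnpos : (0 : ℝ) < n := by exact_mod_cast hn
  have h1 := nd_le β hβ0 n hn
  have hharm : ∑ k ∈ Finset.Icc 1 (n - 1), (1 : ℝ) / k ≤ 1 + Real.log n := by
    rcases Nat.lt_or_ge 1 n with h | h
    · have h2 := harmonic_le (n - 1) (by omega)
      have hcast : ((n - 1 : ℕ) : ℝ) = (n : ℝ) - 1 := by
        push_cast [Nat.cast_sub hn]; ring
      have h2n : (2 : ℝ) ≤ (n : ℝ) := by exact_mod_cast h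
      have hle : Real.log ((n : ℝ) - 1) ≤ Real.log (n : ℝ) :=
        Real.log_le_log (by linarith) (by linarith)
      rw [hcast] at h2
      linarith
    · have : n = 1 := by omega
      subst this
      simp
  have hmono : Real.exp (β * ∑ k ∈ Finset.Icc 1 (n - 1), (1 : ℝ) / k)
      ≤ Real.exp (β * (1 + Real.log n)) :=
    Real.exp_le_exp.2 (mul_le_mul_of_nonneg_left hharm hβ0.le)
  have hrw : Real.exp (β * (1 + Real.log n)) = Real.exp β * (n : ℝ) ^ β := by
    rw [mul_add, Real.exp_add, mul_one, Real.rpow_def_of_pos hnpos, mul_comm (Real.log n) β]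
  calc (n : ℝ) * dcoef β n
      ≤ β * Real.exp (β * ∑ k ∈ Finset.Icc 1 (n - 1), (1 : ℝ) / k) := h1
    _ ≤ β * Real.exp (β * (1 + Real.log n)) := mul_le_mul_of_nonneg_left hmono hβ0.le
    _ = β * Real.exp β * (n : ℝ) ^ β := by rw [hrw, mul_assoc]

end BnAux

namespace BnAux

lemma abel_bound (w : ℂ) (M : ℝ) (hM : ∀ m : ℕ, ‖∑ k ∈ Finset.range m, w ^ (k + 1)‖ ≤ M)
    (a : ℕ → ℝ) (ha : Monotone a) (h1 : 0 ≤ a 1) (n : ℕ) (hn : 1 ≤ n) :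
    ‖∑ j ∈ Finset.Icc 1 n, (a j : ℂ) * w ^ j‖ ≤ 2 * a n * M := by
  have hM0 : 0 ≤ M := le_trans (norm_nonneg _) (hM 1)
  have han : 0 ≤ a n := le_trans h1 (ha hn)
  have hIcc : ∑ j ∈ Finset.Icc 1 n, (a j : ℂ) * w ^ j
      = ∑ i ∈ Finset.range n, ((a (i + 1) : ℝ) : ℂ) • w ^ (i + 1) := by
    rw [← Finset.Ico_add_one_right_eq_Icc, Finset.sum_Ico_eq_sum_range]
    apply Finset.sum_congr (by norm_num)
    intro i _
    rw [add_comm 1 i, smul_eq_mul]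
  rw [hIcc, Finset.sum_range_by_parts (fun i => ((a (i + 1) : ℝ) : ℂ)) (fun i => w ^ (i + 1)) n]
  have hterm1 : ‖((a (n - 1 + 1) : ℝ) : ℂ) • ∑ i ∈ Finset.range n, w ^ (i + 1)‖ ≤ a n * M := by
    rw [norm_smul, Complex.norm_real, Real.norm_eq_abs, show n - 1 + 1 = n from by omega,
      abs_of_nonneg han]
    exact mul_le_mul_of_nonneg_left (hM n) han
  have hterm2 : ‖∑ i ∈ Finset.range (n - 1),
      (((a (i + 1 + 1) : ℝ) : ℂ) - ((a (i + 1) : ℝ) : ℂ)) • ∑ j ∈ Finset.range (i + 1), w ^ (j + 1)‖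
      ≤ a n * M := by
    calc ‖∑ i ∈ Finset.range (n - 1),
        (((a (i + 1 + 1) : ℝ) : ℂ) - ((a (i + 1) : ℝ) : ℂ)) •
          ∑ j ∈ Finset.range (i + 1), w ^ (j + 1)‖
        ≤ ∑ i ∈ Finset.range (n - 1), ‖(((a (i + 1 + 1) : ℝ) : ℂ) - ((a (i + 1) : ℝ) : ℂ)) •
            ∑ j ∈ Finset.range (i + 1), w ^ (j + 1)‖ := norm_sum_le _ _
      _ ≤ ∑ i ∈ Finset.range (n - 1), (a (i + 1 + 1) - a (i + 1)) * M := by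
          apply Finset.sum_le_sum
          intro i _
          rw [norm_smul]
          have hcast : (((a (i + 1 + 1) : ℝ) : ℂ) - ((a (i + 1) : ℝ) : ℂ))
              = ((a (i + 1 + 1) - a (i + 1) : ℝ) : ℂ) := by push_cast; ring
          rw [hcast, Complex.norm_real, Real.norm_eq_abs,
            abs_of_nonneg (sub_nonneg.2 (ha (by omega)))]
          exact mul_le_mul_of_nonneg_left (hM (i + 1)) (sub_nonneg.2 (ha (by omega)))
      _ = (a (n - 1 + 1) - a 1) * M := by
          rw [← Finset.sum_mul, Finset.sum_range_sub (fun i => a (i + 1)) (n - 1)]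
      _ ≤ a n * M := by
          rw [show n - 1 + 1 = n from by omega]
          apply mul_le_mul_of_nonneg_right _ hM0
          linarith
  calc ‖((a (n - 1 + 1) : ℝ) : ℂ) • ∑ i ∈ Finset.range n, w ^ (i + 1)
        - ∑ i ∈ Finset.range (n - 1),
          (((a (i + 1 + 1) : ℝ) : ℂ) - ((a (i + 1) : ℝ) : ℂ)) •
            ∑ j ∈ Finset.range (i + 1), w ^ (j + 1)‖
      ≤ _ + _ := norm_sub_le _ _
    _ ≤ a n * M + a n * M := add_le_add hterm1 hterm2
    _ = 2 * a n * M := by ring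

lemma norm_exp_sub_one (θ : ℝ) (hθπ : |θ| ≤ Real.pi) :
    ‖Complex.exp (θ * Complex.I) - 1‖ = 2 * Real.sin (|θ| / 2) := by
  set w := Complex.exp ((θ : ℂ) * Complex.I) with hw
  have hre : (w - 1).re = Real.cos θ - 1 := by
    simp [hw, Complex.exp_ofReal_mul_I_re, Complex.sub_re]
  have him : (w - 1).im = Real.sin θ := by
    simp [hw, Complex.exp_ofReal_mul_I_im, Complex.sub_im]
  have hnormSq : Complex.normSq (w - 1) = 2 - 2 * Real.cos θ := by
    rw [Complex.normSq_apply, hre, him]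
    nlinarith [Real.sin_sq_add_cos_sq θ]
  have hsinsq : (2 * Real.sin (|θ| / 2)) ^ 2 = 2 - 2 * Real.cos θ := by
    have h := Real.sin_sq_eq_half_sub (|θ| / 2)
    rw [show 2 * (|θ| / 2) = |θ| from by ring, Real.cos_abs] at h
    nlinarith
  have hsin0 : 0 ≤ Real.sin (|θ| / 2) :=
    Real.sin_nonneg_of_nonneg_of_le_pi (by positivity) (by linarith [Real.pi_pos])
  rw [Complex.norm_def, hnormSq, ← hsinsq, Real.sqrt_sq (by positivity)]

lemma geom_tail_bound (θ : ℝ) (hθ0 : 0 < |θ|) (hθπ : |θ| ≤ Real.pi) (m : ℕ) :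
    ‖∑ k ∈ Finset.range m, Complex.exp ((θ : ℂ) * Complex.I) ^ (k + 1)‖ ≤ Real.pi / |θ| := by
  set w := Complex.exp ((θ : ℂ) * Complex.I) with hw
  have hpi := Real.pi_pos
  have hsin : |θ| / Real.pi ≤ Real.sin (|θ| / 2) := by
    have := Real.mul_le_sin (x := |θ| / 2) (by positivity) (by linarith)
    calc |θ| / Real.pi = 2 / Real.pi * (|θ| / 2) := by field_simp
      _ ≤ Real.sin (|θ| / 2) := this
  have hlow : 2 * (|θ| / Real.pi) ≤ ‖w - 1‖ := by
    rw [norm_exp_sub_one θ hθπ]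
    linarith
  have hlowpos : 0 < ‖w - 1‖ := lt_of_lt_of_le (by positivity) hlow
  have hwne : w ≠ 1 := by
    intro h
    rw [h, sub_self, norm_zero] at hlowpos
    exact lt_irrefl 0 hlowpos
  have hwnorm : ‖w‖ = 1 := by
    rw [hw]
    exact Complex.norm_exp_ofReal_mul_I θ
  have hsum : ∑ k ∈ Finset.range m, w ^ (k + 1) = w * ((w ^ m - 1) / (w - 1)) := by
    rw [← geom_sum_eq hwne m, Finset.mul_sum]
    apply Finset.sum_congr rfl
    intro k _
    rw [pow_succ']
  rw [hsum, norm_mul, hwnorm, one_mul, norm_div]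
  have hnum : ‖w ^ m - 1‖ ≤ 2 := by
    calc ‖w ^ m - 1‖ ≤ ‖w ^ m‖ + ‖(1 : ℂ)‖ := norm_sub_le _ _
      _ = 2 := by rw [norm_pow, hwnorm, one_pow, norm_one]; norm_num
  calc ‖w ^ m - 1‖ / ‖w - 1‖ ≤ 2 / (2 * (|θ| / Real.pi)) := by
        exact div_le_div₀ (by norm_num) hnum (mul_pos two_pos (div_pos hθ0 hpi)) hlow
    _ = Real.pi / |θ| := by field_simp

end BnAux

namespace BnAux

lemma trivial_bound (w : ℂ) (hwnorm : ‖w‖ = 1) (a : ℕ → ℝ) (ha : Monotone a) (h1 : 0 ≤ a 1)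
    (n : ℕ) (hn : 1 ≤ n) :
    ‖∑ j ∈ Finset.Icc 1 n, (a j : ℂ) * w ^ j‖ ≤ n * a n := by
  calc ‖∑ j ∈ Finset.Icc 1 n, (a j : ℂ) * w ^ j‖
      ≤ ∑ j ∈ Finset.Icc 1 n, ‖(a j : ℂ) * w ^ j‖ := norm_sum_le _ _
    _ ≤ ∑ j ∈ Finset.Icc 1 n, a n := by
        apply Finset.sum_le_sum
        intro j hj
        obtain ⟨hj1, hjn⟩ := Finset.mem_Icc.1 hj
        rw [norm_mul, norm_pow, hwnorm, one_pow, mul_one, Complex.norm_real,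
          Real.norm_eq_abs, abs_of_nonneg (le_trans h1 (ha hj1))]
        exact ha hjn
    _ = n * a n := by
        rw [Finset.sum_const, Nat.card_Icc]
        simp [nsmul_eq_mul]
end BnAux

/-- bounds on the first and second `θ`-derivatives of
`B_n(e^{iθ}) = 1 + Σ_{j=1}^n d_j e^{ijθ}`, i.e. on `Σ j d_j e^{ijθ}` and `Σ j² d_j e^{ijθ}`. -/
theorem Bn_derivative_bounds (β : ℝ) (hβ : β ∈ Set.Ioo (0 : ℝ) 1) :
    ∃ C > (0 : ℝ), ∀ n : ℕ, 1 ≤ n → ∀ θ : ℝ, 0 < |θ| → |θ| ≤ Real.pi →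
      (((n : ℝ)⁻¹ < |θ| →
        ‖∑ j ∈ Finset.Icc 1 n, (j : ℂ) * (dcoef β j : ℂ) *
            Complex.exp (Complex.I * (j : ℂ) * (θ : ℂ))‖ ≤ C * (n : ℝ) ^ β / |θ|) ∧
       (|θ| ≤ (n : ℝ)⁻¹ →
        ‖∑ j ∈ Finset.Icc 1 n, (j : ℂ) * (dcoef β j : ℂ) *
            Complex.exp (Complex.I * (j : ℂ) * (θ : ℂ))‖ ≤ C * (n : ℝ) ^ (1 + β))) ∧
      (((n : ℝ)⁻¹ < |θ| →
        ‖∑ j ∈ Finset.Icc 1 n, (j : ℂ) ^ 2 * (dcoef β j : ℂ) *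
            Complex.exp (Complex.I * (j : ℂ) * (θ : ℂ))‖ ≤ C * (n : ℝ) ^ (β + 1) / |θ|) ∧
       (|θ| ≤ (n : ℝ)⁻¹ →
        ‖∑ j ∈ Finset.Icc 1 n, (j : ℂ) ^ 2 * (dcoef β j : ℂ) *
            Complex.exp (Complex.I * (j : ℂ) * (θ : ℂ))‖ ≤ C * (n : ℝ) ^ (2 + β))) := by
  obtain ⟨hβ0, hβ1⟩ := hβ
  have hexp : 0 < Real.exp β := Real.exp_pos β
  refine ⟨10 * Real.exp β, by positivity, ?_⟩
  intro n hn θ hθ0 hθπ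
  have hpi := Real.pi_pos
  have hpile := Real.pi_le_four
  have hnpos : (0 : ℝ) < n := by exact_mod_cast hn
  set a : ℕ → ℝ := fun j => (j : ℝ) * dcoef β j with ha_def
  set b : ℕ → ℝ := fun j => (j : ℝ) ^ 2 * dcoef β j with hb_def
  have hamono : Monotone a := by
    apply monotone_nat_of_le_succ
    intro j
    have h := BnAux.key_rec β j
    have hd := BnAux.dcoef_pos hβ0 j
    simp only [ha_def]
    push_cast
    nlinarith
  have hbmono : Monotone b := by
    apply monotone_nat_of_le_succ
    intro j
    have h := BnAux.key_rec β j
    have hd := BnAux.dcoef_pos hβ0 j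
    have hj0 : (0 : ℝ) ≤ (j : ℝ) := Nat.cast_nonneg j
    have h2 : ((j : ℝ) + 1) ^ 2 * dcoef β (j + 1)
        = ((j : ℝ) + 1) * ((j : ℝ) * dcoef β j + β * dcoef β j) := by
      rw [pow_two, mul_assoc, h]
    simp only [hb_def]
    push_cast
    nlinarith [mul_nonneg hj0 hd.le]
  have h1a : 0 ≤ a 1 := by
    simp only [ha_def, Nat.cast_one, one_mul]
    exact (BnAux.dcoef_pos hβ0 1).le
  have h1b : 0 ≤ b 1 := by
    simp only [hb_def, Nat.cast_one, one_pow, one_mul]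
    exact (BnAux.dcoef_pos hβ0 1).le
  have hwnorm : ‖Complex.exp ((θ : ℂ) * Complex.I)‖ = 1 := by
    exact Complex.norm_exp_ofReal_mul_I θ
  have hS1 : ∑ j ∈ Finset.Icc 1 n, (j : ℂ) * (dcoef β j : ℂ) *
      Complex.exp (Complex.I * (j : ℂ) * (θ : ℂ))
      = ∑ j ∈ Finset.Icc 1 n, ((a j : ℝ) : ℂ) * Complex.exp ((θ : ℂ) * Complex.I) ^ j := by
    apply Finset.sum_congr rfl
    intro j _
    have harg : Complex.I * (j : ℂ) * (θ : ℂ) = (j : ℕ) * ((θ : ℂ) * Complex.I) := by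
      push_cast; ring
    rw [harg, Complex.exp_nat_mul]
    simp only [ha_def]
    push_cast
    ring
  have hS2 : ∑ j ∈ Finset.Icc 1 n, (j : ℂ) ^ 2 * (dcoef β j : ℂ) *
      Complex.exp (Complex.I * (j : ℂ) * (θ : ℂ))
      = ∑ j ∈ Finset.Icc 1 n, ((b j : ℝ) : ℂ) * Complex.exp ((θ : ℂ) * Complex.I) ^ j := by
    apply Finset.sum_congr rfl
    intro j _
    have harg : Complex.I * (j : ℂ) * (θ : ℂ) = (j : ℕ) * ((θ : ℂ) * Complex.I) := by
      push_cast; ring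
    rw [harg, Complex.exp_nat_mul]
    simp only [hb_def]
    push_cast
    ring
  have hM := BnAux.geom_tail_bound θ hθ0 hθπ
  have habel1 := BnAux.abel_bound _ _ hM a hamono h1a n hn
  have habel2 := BnAux.abel_bound _ _ hM b hbmono h1b n hn
  have htriv1 := BnAux.trivial_bound _ hwnorm a hamono h1a n hn
  have htriv2 := BnAux.trivial_bound _ hwnorm b hbmono h1b n hn
  have hcoef : a n ≤ β * Real.exp β * (n : ℝ) ^ β := BnAux.nd_le_rpow β hβ0 n hn
  have hbn : b n = n * a n := by simp only [hb_def, ha_def]; ring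
  have hrpow_pos : 0 < (n : ℝ) ^ β := Real.rpow_pos_of_pos hnpos β
  have hsplit1 : (n : ℝ) ^ (1 + β) = n * (n : ℝ) ^ β := by
    rw [Real.rpow_add hnpos, Real.rpow_one]
  have hsplitβ1 : (n : ℝ) ^ (β + 1) = (n : ℝ) ^ β * n := by
    rw [Real.rpow_add hnpos, Real.rpow_one]
  have hsplit2 : (n : ℝ) ^ (2 + β) = n * (n * (n : ℝ) ^ β) := by
    rw [show (2 : ℝ) + β = 1 + (1 + β) by ring, Real.rpow_add hnpos, Real.rpow_one, hsplit1]
  have han : 0 ≤ a n := le_trans h1a (hamono hn)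
  have key1 : 2 * a n * Real.pi ≤ 10 * Real.exp β * (n : ℝ) ^ β := by
    nlinarith [mul_le_mul_of_nonneg_left hcoef (by linarith : (0 : ℝ) ≤ 2 * Real.pi),
      mul_pos hexp hrpow_pos]
  refine ⟨⟨fun _ => ?_, fun _ => ?_⟩, fun _ => ?_, fun _ => ?_⟩
  · rw [hS1]
    calc ‖∑ j ∈ Finset.Icc 1 n, ((a j : ℝ) : ℂ) * Complex.exp ((θ : ℂ) * Complex.I) ^ j‖
        ≤ 2 * a n * (Real.pi / |θ|) := habel1
      _ = 2 * a n * Real.pi / |θ| := by ring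
      _ ≤ 10 * Real.exp β * (n : ℝ) ^ β / |θ| := (div_le_div_iff_of_pos_right hθ0).2 key1
  · rw [hS1]
    calc ‖∑ j ∈ Finset.Icc 1 n, ((a j : ℝ) : ℂ) * Complex.exp ((θ : ℂ) * Complex.I) ^ j‖
        ≤ n * a n := htriv1
      _ ≤ 10 * Real.exp β * (n : ℝ) ^ (1 + β) := by
          rw [hsplit1]
          calc (n : ℝ) * a n ≤ n * (β * Real.exp β * (n : ℝ) ^ β) :=
                mul_le_mul_of_nonneg_left hcoef hnpos.le
            _ = β * Real.exp β * ((n : ℝ) * (n : ℝ) ^ β) := by ring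
            _ ≤ 10 * Real.exp β * ((n : ℝ) * (n : ℝ) ^ β) :=
                mul_le_mul_of_nonneg_right (by nlinarith) (by positivity)
  · rw [hS2]
    calc ‖∑ j ∈ Finset.Icc 1 n, ((b j : ℝ) : ℂ) * Complex.exp ((θ : ℂ) * Complex.I) ^ j‖
        ≤ 2 * b n * (Real.pi / |θ|) := habel2
      _ = 2 * (n * a n) * Real.pi / |θ| := by rw [hbn]; ring
      _ ≤ 10 * Real.exp β * (n : ℝ) ^ (β + 1) / |θ| := by
          rw [hsplitβ1]
          apply (div_le_div_iff_of_pos_right hθ0).2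
          calc 2 * ((n : ℝ) * a n) * Real.pi = (n : ℝ) * (2 * a n * Real.pi) := by ring
            _ ≤ (n : ℝ) * (10 * Real.exp β * (n : ℝ) ^ β) :=
                mul_le_mul_of_nonneg_left key1 hnpos.le
            _ = 10 * Real.exp β * ((n : ℝ) ^ β * (n : ℝ)) := by ring
  · rw [hS2]
    calc ‖∑ j ∈ Finset.Icc 1 n, ((b j : ℝ) : ℂ) * Complex.exp ((θ : ℂ) * Complex.I) ^ j‖
        ≤ n * b n := htriv2
      _ ≤ 10 * Real.exp β * (n : ℝ) ^ (2 + β) := by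
          rw [hbn, hsplit2]
          calc (n : ℝ) * ((n : ℝ) * a n) ≤ (n : ℝ) * ((n : ℝ) * (β * Real.exp β * (n : ℝ) ^ β)) := by
                apply mul_le_mul_of_nonneg_left _ hnpos.le
                exact mul_le_mul_of_nonneg_left hcoef hnpos.le
            _ = β * Real.exp β * ((n : ℝ) * ((n : ℝ) * (n : ℝ) ^ β)) := by ring
            _ ≤ 10 * Real.exp β * ((n : ℝ) * ((n : ℝ) * (n : ℝ) ^ β)) :=
                mul_le_mul_of_nonneg_right (by nlinarith) (by positivity)
end
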